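/- arXiv:2402.18703 — 4 statements merged into one kernel-verified Lean document; each statement's English description precedes it below -/
import Mathlib

section
/- For every quantum channel Φ on M_d(ℂ) there exists N ≤ d² such that for all n ≥ 0: M(Φ^N) = M(Φ^{N+n}), D(Φ^N) = D(Φ^{N+n}), and M_E(Φ^N) = M_E(Φ^{N+n}); that is, the one-shot zero-error classical, quantum, and entanglement-assisted classical capacities of Φ^n all stabilize after at most d² iterations. -/
open Matrix Filter
open scoped ComplexOrder

/-- The algebra of `n × n` complex matrices. -/
abbrev Mat (n : ℕ) := Matrix (Fin n) (Fin n) ℂ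

/-- A linear map between matrix algebras is a quantum channel if it admits a Kraus
representation `Φ(X) = ∑ i, K i * X * (K i)ᴴ` with `∑ i, (K i)ᴴ * K i = 1`. -/
def IsChannel {m n : ℕ} (Φ : Matrix (Fin m) (Fin m) ℂ →ₗ[ℂ] Mat n) : Prop :=
  ∃ (p : ℕ) (K : Fin p → Matrix (Fin n) (Fin m) ℂ),
    (∀ X, Φ X = ∑ i, K i * X * (K i)ᴴ) ∧ ∑ i, (K i)ᴴ * K i = 1

/-- A quantum state: positive semidefinite with unit trace. -/
def IsState {n : ℕ} (ρ : Mat n) : Prop := ρ.PosSemidef ∧ ρ.trace = 1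

/-- The rank-one matrix `|ψ⟩⟨ψ|`. -/
def pureState {ι : Type*} (ψ : ι → ℂ) : Matrix ι ι ℂ :=
  Matrix.of fun i j => ψ i * star (ψ j)

/-- `ψ` is a unit vector. -/
def IsUnitVec {ι : Type*} [Fintype ι] (ψ : ι → ℂ) : Prop :=
  ∑ i, star (ψ i) * ψ i = 1

/-- c-scrambling: outputs of orthogonal pure states are never orthogonal. -/
def CScrambling {n : ℕ} (Φ : Mat n →ₗ[ℂ] Mat n) : Prop :=
  ∀ ψ φ : Fin n → ℂ, IsUnitVec ψ → IsUnitVec φ → ∑ i, star (ψ i) * φ i = 0 →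
    0 < (Φ (pureState ψ) * Φ (pureState φ)).trace

/-- A subspace `C ⊆ ℂ^n` is correctable for `Φ`. -/
def Correctable {n : ℕ} (Φ : Mat n →ₗ[ℂ] Mat n) (C : Submodule ℂ (Fin n → ℂ)) : Prop :=
  ∃ R : Mat n →ₗ[ℂ] Mat n, IsChannel R ∧
    ∀ ρ : Mat n, IsState ρ → LinearMap.range ρ.mulVecLin ≤ C → R (Φ ρ) = ρ

/-- q-scrambling: no correctable subspace of dimension ≥ 2. -/
def QScrambling {n : ℕ} (Φ : Mat n →ₗ[ℂ] Mat n) : Prop :=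
  ∀ C : Submodule ℂ (Fin n → ℂ), Correctable Φ C → Module.finrank ℂ C ≤ 1

/-- Apply `Φ` to the first tensor factor: `(Φ ⊗ id) M`. -/
def tensorId {d₀ n d₁ : ℕ} (Φ : Matrix (Fin d₀) (Fin d₀) ℂ →ₗ[ℂ] Mat n)
    (M : Matrix (Fin d₀ × Fin d₁) (Fin d₀ × Fin d₁) ℂ) :
    Matrix (Fin n × Fin d₁) (Fin n × Fin d₁) ℂ :=
  Matrix.of fun p q => Φ (Matrix.of fun k l => M (k, p.2) (l, q.2)) p.1 q.1

/-- Vanishing one-shot zero-error entanglement-assisted classical capacity. -/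
def VanishingC0E {n : ℕ} (Φ : Mat n →ₗ[ℂ] Mat n) : Prop :=
  ∀ (d₀ d₁ : ℕ), 0 < d₀ → 0 < d₁ → ∀ ψ : Fin d₀ × Fin d₁ → ℂ, IsUnitVec ψ →
    ∀ E₁ E₂ : Matrix (Fin d₀) (Fin d₀) ℂ →ₗ[ℂ] Mat n, IsChannel E₁ → IsChannel E₂ →
      0 < (tensorId (Φ ∘ₗ E₁) (pureState ψ) * tensorId (Φ ∘ₗ E₂) (pureState ψ)).trace

/-- Mixing channel: `Φ^n X → Tr(X) ρ⋆` entrywise. -/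
def Mixing {n : ℕ} (Φ : Module.End ℂ (Mat n)) : Prop :=
  ∃ ρ : Mat n, IsState ρ ∧
    ∀ X : Mat n, Tendsto (fun k => (Φ ^ k) X) atTop (nhds (X.trace • ρ))

/-- Strictly positive channel: every state is sent to a positive definite matrix. -/
def StrictlyPositive {n : ℕ} (Φ : Mat n →ₗ[ℂ] Mat n) : Prop :=
  ∀ ρ : Mat n, IsState ρ → (Φ ρ).PosDef

/-- Primitive channel: mixing with positive definite invariant state. -/
def Primitive {n : ℕ} (Φ : Module.End ℂ (Mat n)) : Prop :=
  ∃ ρ : Mat n, IsState ρ ∧ ρ.PosDef ∧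
    ∀ X : Mat n, Tendsto (fun k => (Φ ^ k) X) atTop (nhds (X.trace • ρ))

/-- Classical scrambling time `c(Φ)`. -/
noncomputable def cTime {n : ℕ} (Φ : Module.End ℂ (Mat n)) : ℕ∞ :=
  sInf {N : ℕ∞ | ∃ k : ℕ, N = k ∧ 1 ≤ k ∧ CScrambling (Φ ^ k)}

/-- Quantum scrambling time `q(Φ)`. -/
noncomputable def qTime {n : ℕ} (Φ : Module.End ℂ (Mat n)) : ℕ∞ :=
  sInf {N : ℕ∞ | ∃ k : ℕ, N = k ∧ 1 ≤ k ∧ QScrambling (Φ ^ k)}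

/-- Entanglement-assisted classical scrambling time `c_E(Φ)`. -/
noncomputable def cETime {n : ℕ} (Φ : Module.End ℂ (Mat n)) : ℕ∞ :=
  sInf {N : ℕ∞ | ∃ k : ℕ, N = k ∧ 1 ≤ k ∧ VanishingC0E (Φ ^ k)}

/-- Wielandt index `w(Φ)`. -/
noncomputable def wTime {n : ℕ} (Φ : Module.End ℂ (Mat n)) : ℕ∞ :=
  sInf {N : ℕ∞ | ∃ k : ℕ, N = k ∧ 1 ≤ k ∧ StrictlyPositive (Φ ^ k)}

/-- `M(Φ)`: the maximal size of a zero-error classical code for `Φ`. -/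
noncomputable def Mclassical {n : ℕ} (Φ : Mat n →ₗ[ℂ] Mat n) : ℕ :=
  sSup {M : ℕ | ∃ ψ : Fin M → Fin n → ℂ, (∀ m, IsUnitVec (ψ m)) ∧
    ∀ m m', m ≠ m' → (Φ (pureState (ψ m)) * Φ (pureState (ψ m'))).trace = 0}

/-- `D(Φ)`: the maximal dimension of a correctable subspace for `Φ`. -/
noncomputable def Dquantum {n : ℕ} (Φ : Mat n →ₗ[ℂ] Mat n) : ℕ :=
  sSup {M : ℕ | ∃ C : Submodule ℂ (Fin n → ℂ), Correctable Φ C ∧ Module.finrank ℂ C = M}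

/-- `M_E(Φ)`: the maximal size of an entanglement-assisted zero-error classical code. -/
noncomputable def MEclassical {n : ℕ} (Φ : Mat n →ₗ[ℂ] Mat n) : ℕ :=
  sSup {M : ℕ | ∃ (d₀ d₁ : ℕ) (ψ : Fin d₀ × Fin d₁ → ℂ), 0 < d₀ ∧ 0 < d₁ ∧ IsUnitVec ψ ∧
    ∃ E : Fin M → (Matrix (Fin d₀) (Fin d₀) ℂ →ₗ[ℂ] Mat n),
      (∀ m, IsChannel (E m)) ∧
      ∀ m m', m ≠ m' →
        (tensorId (Φ ∘ₗ E m) (pureState ψ) * tensorId (Φ ∘ₗ E m') (pureState ψ)).trace = 0}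

/-- The ordered product `K_{i 0} ⋯ K_{i (n-1)}` of Kraus operators. -/
noncomputable def krausProd {d p : ℕ} (K : Fin p → Mat d) {n : ℕ} (i : Fin n → Fin p) : Mat d :=
  (List.ofFn fun t => K (i t)).prod

/-- The operator system of `Φ^n`, for `Φ` with Kraus operators `K`. -/
noncomputable def opSys {d p : ℕ} (K : Fin p → Mat d) (n : ℕ) : Submodule ℂ (Mat d) :=
  Submodule.span ℂ {X | ∃ i j : Fin n → Fin p, X = (krausProd K i)ᴴ * krausProd K j}

/-- `𝒦_n(Φ)`: the span of `n`-fold products of Kraus operators. -/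
noncomputable def kSpan {d p : ℕ} (K : Fin p → Mat d) (n : ℕ) : Submodule ℂ (Mat d) :=
  Submodule.span ℂ {X | ∃ i : Fin n → Fin p, X = krausProd K i}

/-- `A` is column stochastic. -/
def ColumnStochastic {d : ℕ} (A : Matrix (Fin d) (Fin d) ℝ) : Prop :=
  (∀ i j, 0 ≤ A i j) ∧ ∀ j, ∑ i, A i j = 1

/-- The CDUC map `Φ_{A,B}(X) = ∑ᵢⱼ A i j * X j j |i⟩⟨i| + ∑_{i≠j} B i j * X i j |i⟩⟨j|`. -/
noncomputable def cducMap {d : ℕ} (A : Matrix (Fin d) (Fin d) ℝ) (B : Mat d) :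
    Mat d →ₗ[ℂ] Mat d where
  toFun X := Matrix.of fun i j =>
    if i = j then ∑ k, (A i k : ℂ) * X k k else B i j * X i j
  map_add' X Y := by
    ext i j
    by_cases h : i = j <;>
      simp [h, Matrix.add_apply, mul_add, Finset.sum_add_distrib]
  map_smul' c X := by
    ext i j
    by_cases h : i = j <;>
      simp [h, Matrix.smul_apply, smul_eq_mul, Finset.mul_sum, mul_left_comm]

/-- The DUC map `Φ_{A,C}(X) = ∑ᵢⱼ A i j * X j j |i⟩⟨i| + ∑_{i≠j} C i j * X j i |i⟩⟨j|`. -/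
noncomputable def ducMap {d : ℕ} (A : Matrix (Fin d) (Fin d) ℝ) (C : Mat d) :
    Mat d →ₗ[ℂ] Mat d where
  toFun X := Matrix.of fun i j =>
    if i = j then ∑ k, (A i k : ℂ) * X k k else C i j * X j i
  map_add' X Y := by
    ext i j
    by_cases h : i = j <;>
      simp [h, Matrix.add_apply, mul_add, Finset.sum_add_distrib]
  map_smul' c X := by
    ext i j
    by_cases h : i = j <;>
      simp [h, Matrix.smul_apply, smul_eq_mul, Finset.mul_sum, mul_left_comm]

/-- The classical channel `Φ_A(X) = ∑ᵢⱼ A i j * X j j |i⟩⟨i|` of a stochastic matrix `A`. -/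
noncomputable def classicalChannel {d : ℕ} (A : Matrix (Fin d) (Fin d) ℝ) :
    Mat d →ₗ[ℂ] Mat d :=
  cducMap A 0

/-- A stochastic matrix is scrambling if any two columns overlap in some row. -/
def MatScrambling {d : ℕ} (A : Matrix (Fin d) (Fin d) ℝ) : Prop :=
  ∀ i j, ∃ k, 0 < A k i * A k j

/-- A matrix with strictly positive entries. -/
def MatStrictlyPositive {d : ℕ} (A : Matrix (Fin d) (Fin d) ℝ) : Prop :=
  ∀ i j, 0 < A i j

/-- A stochastic matrix is mixing if `1` is an eigenvalue of algebraic multiplicity one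
and there is no other eigenvalue of modulus one. -/
def MatMixing {d : ℕ} (A : Matrix (Fin d) (Fin d) ℝ) : Prop :=
  Polynomial.rootMultiplicity 1 (Matrix.charpoly (A.map Complex.ofReal)) = 1 ∧
  ∀ μ : ℂ, ‖μ‖ = 1 → (Matrix.charpoly (A.map Complex.ofReal)).IsRoot μ → μ = 1

/-- A stochastic matrix is primitive if it is mixing and its invariant probability
vector is entrywise strictly positive. -/
def MatPrimitive {d : ℕ} (A : Matrix (Fin d) (Fin d) ℝ) : Prop :=
  MatMixing A ∧
    ∀ v : Fin d → ℝ, (∀ i, 0 ≤ v i) → ∑ i, v i = 1 → A *ᵥ v = v → ∀ i, 0 < v i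

/-- The scrambling time of a stochastic matrix. -/
noncomputable def cMat {d : ℕ} (A : Matrix (Fin d) (Fin d) ℝ) : ℕ∞ :=
  sInf {N : ℕ∞ | ∃ k : ℕ, N = k ∧ 1 ≤ k ∧ MatScrambling (A ^ k)}

/-- The Wielandt index of a stochastic matrix. -/
noncomputable def wMat {d : ℕ} (A : Matrix (Fin d) (Fin d) ℝ) : ℕ∞ :=
  sInf {N : ℕ∞ | ∃ k : ℕ, N = k ∧ 1 ≤ k ∧ MatStrictlyPositive (A ^ k)}

/-- The matrix `A_d` from the paper (0-indexed). -/
noncomputable def Amat (d : ℕ) : Matrix (Fin d) (Fin d) ℝ :=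
  Matrix.of fun i j =>
    if (i : ℕ) = d - 1 ∧ (j : ℕ) = 0 then 1
    else if (j : ℕ) = 1 ∧ ((i : ℕ) = 0 ∨ (i : ℕ) = d - 1) then 1 / 2
    else if 2 ≤ (j : ℕ) ∧ (i : ℕ) + 1 = (j : ℕ) then 1
    else 0

namespace CapStab

/-- rectangular "outer product" `u vᴴ` -/
def outer {κ κ' : Type*} (u : κ → ℂ) (v : κ' → ℂ) : Matrix κ κ' ℂ :=
  Matrix.of fun k l => u k * star (v l)

lemma pureState_eq_outer {ι : Type*} (ψ : ι → ℂ) : pureState ψ = outer ψ ψ := rfl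

lemma outer_mul_conjTranspose {ι κ κ' : Type*} [Fintype κ'] (N : Matrix ι κ' ℂ)
    (u : κ → ℂ) (v : κ' → ℂ) : outer u v * Nᴴ = outer u (N *ᵥ v) := by
  ext k j
  simp only [outer, Matrix.mul_apply, Matrix.of_apply, Matrix.conjTranspose_apply,
    Matrix.mulVec, dotProduct, star_sum, star_mul', Finset.mul_sum]
  exact Finset.sum_congr rfl fun l _ => by ring

lemma mul_outer {ι κ κ' : Type*} [Fintype κ] (M : Matrix ι κ ℂ)
    (u : κ → ℂ) (v : κ' → ℂ) : M * outer u v = outer (M *ᵥ u) v := by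
  ext i j
  simp only [outer, Matrix.mul_apply, Matrix.of_apply, Matrix.mulVec, dotProduct,
    Finset.sum_mul]
  exact Finset.sum_congr rfl fun l _ => by ring

lemma mul_outer_mul {ι ι' κ κ' : Type*} [Fintype κ] [Fintype κ']
    (M : Matrix ι κ ℂ) (N : Matrix ι' κ' ℂ) (u : κ → ℂ) (v : κ' → ℂ) :
    M * outer u v * Nᴴ = outer (M *ᵥ u) (N *ᵥ v) := by
  rw [mul_outer, outer_mul_conjTranspose]

lemma outer_mul_outer {ι κ τ : Type*} [Fintype κ] (u : ι → ℂ) (v w : κ → ℂ) (z : τ → ℂ) :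
    outer u v * outer w z = (star v ⬝ᵥ w) • outer u z := by
  ext i j
  simp only [outer, Matrix.mul_apply, Matrix.of_apply, Matrix.smul_apply,
    dotProduct, Finset.sum_mul, smul_eq_mul, Pi.star_apply]
  exact Finset.sum_congr rfl fun l _ => by ring

lemma trace_outer {ι : Type*} [Fintype ι] (u v : ι → ℂ) :
    (outer u v).trace = star v ⬝ᵥ u := by
  simp only [Matrix.trace, Matrix.diag, outer, Matrix.of_apply, dotProduct,
    Pi.star_apply]
  exact Finset.sum_congr rfl fun l _ => by ring

lemma trace_pure_mul_pure {τ : Type*} [Fintype τ] (u v : τ → ℂ) :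
    (pureState u * pureState v).trace
      = ((star u ⬝ᵥ v) * star (star u ⬝ᵥ v) : ℂ) := by
  rw [pureState_eq_outer, pureState_eq_outer, outer_mul_outer, Matrix.trace_smul,
    trace_outer]
  congr 1
  simp only [dotProduct, star_sum, star_mul', Pi.star_apply, star_star]
  exact Finset.sum_congr rfl fun l _ => by ring

/-- key positivity lemma: trace of product of two sums of pure states vanishes iff all
cross inner products vanish. -/
lemma trace_sum_pure_mul_sum_pure {τ α β : Type*} [Fintype τ] [Fintype α] [Fintype β]
    (v : α → τ → ℂ) (w : β → τ → ℂ) :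
    ((∑ a, pureState (v a)) * (∑ b, pureState (w b))).trace = 0
      ↔ ∀ a b, star (v a) ⬝ᵥ w b = 0 := by
  rw [Finset.sum_mul_sum]
  rw [Matrix.trace_sum]
  simp_rw [Matrix.trace_sum, trace_pure_mul_pure]
  have : ∀ a b, (star (v a) ⬝ᵥ w b) * star (star (v a) ⬝ᵥ w b)
      = (Complex.normSq (star (v a) ⬝ᵥ w b) : ℂ) := fun a b => by
    rw [← Complex.mul_conj]; rfl
  simp_rw [this]
  push_cast [← Complex.ofReal_sum]
  rw [Complex.ofReal_eq_zero]
  constructor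
  · intro h a b
    have h1 : ∀ a ∈ (Finset.univ : Finset α),
        (0:ℝ) ≤ ∑ b, Complex.normSq (star (v a) ⬝ᵥ w b) :=
      fun a _ => Finset.sum_nonneg fun b _ => Complex.normSq_nonneg _
    have h2 := (Finset.sum_eq_zero_iff_of_nonneg h1).mp h a (Finset.mem_univ a)
    have h3 : ∀ b ∈ (Finset.univ : Finset β),
        (0:ℝ) ≤ Complex.normSq (star (v a) ⬝ᵥ w b) :=
      fun b _ => Complex.normSq_nonneg _
    have h4 := (Finset.sum_eq_zero_iff_of_nonneg h3).mp h2 b (Finset.mem_univ b)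
    exact Complex.normSq_eq_zero.mp h4
  · intro h
    simp [fun a b => Complex.normSq_eq_zero.mpr (h a b)]

section Kraus
variable {d p : ℕ} (K : Fin p → Mat d)

lemma krausProd_zero (i : Fin 0 → Fin p) : krausProd K i = 1 := by
  simp [krausProd]

lemma krausProd_cons {k : ℕ} (a : Fin p) (t : Fin k → Fin p) :
    krausProd K (Fin.cons a t) = K a * krausProd K t := by
  rw [krausProd, List.ofFn_succ, List.prod_cons]
  simp [krausProd]

lemma krausProd_snoc {k : ℕ} (t : Fin k → Fin p) (a : Fin p) :
    krausProd K (Fin.snoc t a) = krausProd K t * K a := by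
  rw [krausProd, List.ofFn_succ', List.concat_eq_append, List.prod_append]
  simp [krausProd]

lemma pow_apply_kraus {Φ : Module.End ℂ (Mat d)}
    (hK : ∀ X, Φ X = ∑ i, K i * X * (K i)ᴴ) (k : ℕ) (X : Mat d) :
    (Φ ^ k) X = ∑ i : Fin k → Fin p, krausProd K i * X * (krausProd K i)ᴴ := by
  induction k generalizing X with
  | zero =>
    rw [Fintype.sum_unique]
    simp [krausProd_zero]
  | succ k ih =>
    have h1 : (Φ ^ (k + 1)) X = Φ ((Φ ^ k) X) := by rw [pow_succ']; rfl
    rw [h1, ih, hK, ← (Fin.consEquiv fun _ : Fin (k+1) => Fin p).sum_comp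
      (fun i => krausProd K i * X * (krausProd K i)ᴴ), Fintype.sum_prod_type]
    refine Finset.sum_congr rfl fun a _ => ?_
    rw [Finset.mul_sum, Finset.sum_mul]
    refine Finset.sum_congr rfl fun t _ => ?_
    show K a * (krausProd K t * X * (krausProd K t)ᴴ) * (K a)ᴴ
        = krausProd K (Fin.consEquiv _ (a, t)) * X * (krausProd K (Fin.consEquiv _ (a, t)))ᴴ
    have : (Fin.consEquiv fun _ : Fin (k+1) => Fin p) (a, t) = Fin.cons a t := rfl
    rw [this, krausProd_cons, Matrix.conjTranspose_mul]
    noncomm_ring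

lemma krausProd_sum_one (hK1 : ∑ i, (K i)ᴴ * K i = 1) (k : ℕ) :
    ∑ i : Fin k → Fin p, (krausProd K i)ᴴ * krausProd K i = 1 := by
  induction k with
  | zero => rw [Fintype.sum_unique]; simp [krausProd_zero]
  | succ k ih =>
    rw [← (Fin.consEquiv fun _ : Fin (k+1) => Fin p).sum_comp
      (fun i => (krausProd K i)ᴴ * krausProd K i), Fintype.sum_prod_type]
    have h2 : ∀ a : Fin p, ∀ t : Fin k → Fin p,
        (krausProd K (Fin.consEquiv _ (a, t)))ᴴ * krausProd K (Fin.consEquiv _ (a, t))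
          = (krausProd K t)ᴴ * ((K a)ᴴ * K a) * krausProd K t := by
      intro a t
      have : (Fin.consEquiv fun _ : Fin (k+1) => Fin p) (a, t) = Fin.cons a t := rfl
      rw [this, krausProd_cons, Matrix.conjTranspose_mul]
      noncomm_ring
    simp_rw [h2]
    rw [Finset.sum_comm]
    calc ∑ t : Fin k → Fin p, ∑ a : Fin p,
          (krausProd K t)ᴴ * ((K a)ᴴ * K a) * krausProd K t
        = ∑ t : Fin k → Fin p, (krausProd K t)ᴴ * (∑ a, (K a)ᴴ * K a) * krausProd K t := by
          refine Finset.sum_congr rfl fun t _ => ?_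
          rw [Finset.mul_sum, Finset.sum_mul]
      _ = 1 := by rw [hK1]; simpa using ih

/-- the sandwich map `X ↦ Aᴴ X B`. -/
noncomputable def sandwich {d : ℕ} (A B : Mat d) : Mat d →ₗ[ℂ] Mat d where
  toFun X := Aᴴ * X * B
  map_add' X Y := by noncomm_ring
  map_smul' c X := by simp [Matrix.mul_smul, Matrix.smul_mul]

lemma opSys_le_succ (hK1 : ∑ i, (K i)ᴴ * K i = 1) (k : ℕ) :
    opSys K k ≤ opSys K (k + 1) := by
  rw [opSys, Submodule.span_le]
  rintro X ⟨i, j, rfl⟩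
  have hX : (krausProd K i)ᴴ * krausProd K j
      = ∑ a : Fin p, (krausProd K (Fin.cons a i))ᴴ * krausProd K (Fin.cons a j) := by
    simp_rw [krausProd_cons, Matrix.conjTranspose_mul]
    calc (krausProd K i)ᴴ * krausProd K j
        = (krausProd K i)ᴴ * (∑ a, (K a)ᴴ * K a) * krausProd K j := by
          rw [hK1, Matrix.mul_one]
      _ = ∑ a, (krausProd K i)ᴴ * (K a)ᴴ * (K a * krausProd K j) := by
          rw [Finset.mul_sum, Finset.sum_mul]
          refine Finset.sum_congr rfl fun a _ => by noncomm_ring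
  rw [hX]
  exact Submodule.sum_mem _ fun a _ =>
    Submodule.subset_span ⟨Fin.cons a i, Fin.cons a j, rfl⟩

lemma opSys_succ (k : ℕ) : opSys K (k + 1)
    = ⨆ ab : Fin p × Fin p, (opSys K k).map (sandwich (K ab.1) (K ab.2)) := by
  apply le_antisymm
  · rw [opSys, Submodule.span_le]
    rintro X ⟨i, j, rfl⟩
    have hi : i = Fin.snoc (Fin.init i) (i (Fin.last k)) := (Fin.snoc_init_self i).symm
    have hj : j = Fin.snoc (Fin.init j) (j (Fin.last k)) := (Fin.snoc_init_self j).symm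
    have hX : (krausProd K i)ᴴ * krausProd K j
        = sandwich (K (i (Fin.last k))) (K (j (Fin.last k)))
            ((krausProd K (Fin.init i))ᴴ * krausProd K (Fin.init j)) := by
      conv_lhs => rw [hi, hj]
      rw [krausProd_snoc, krausProd_snoc, Matrix.conjTranspose_mul]
      show _ = (K (i (Fin.last k)))ᴴ * _ * K (j (Fin.last k))
      noncomm_ring
    rw [hX]
    refine le_iSup (fun ab : Fin p × Fin p => (opSys K k).map (sandwich (K ab.1) (K ab.2)))
      (i (Fin.last k), j (Fin.last k)) ?_
    exact ⟨_, Submodule.subset_span ⟨Fin.init i, Fin.init j, rfl⟩, rfl⟩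
  · rw [iSup_le_iff]
    rintro ⟨a, b⟩
    rw [opSys, Submodule.map_span, Submodule.span_le]
    rintro _ ⟨_, ⟨i, j, rfl⟩, rfl⟩
    refine Submodule.subset_span ⟨Fin.snoc i a, Fin.snoc j b, ?_⟩
    rw [krausProd_snoc, krausProd_snoc, Matrix.conjTranspose_mul]
    show (K a)ᴴ * _ * K b = _
    noncomm_ring

lemma opSys_congr_succ {N M : ℕ} (h : opSys K N = opSys K M) :
    opSys K (N + 1) = opSys K (M + 1) := by
  rw [opSys_succ, opSys_succ, h]

lemma opSys_stab {N : ℕ} (h : opSys K N = opSys K (N + 1)) (n : ℕ) :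
    opSys K (N + n) = opSys K N := by
  induction n with
  | zero => rfl
  | succ n ih => rw [show N + (n + 1) = (N + n) + 1 from rfl,
      opSys_congr_succ K ih, ← h]

lemma exists_opSys_stab (hK1 : ∑ i, (K i)ᴴ * K i = 1) :
    ∃ N ≤ d ^ 2, opSys K N = opSys K (N + 1) := by
  by_contra h
  push_neg at h
  have chain : ∀ k, k ≤ d ^ 2 + 1 → k ≤ Module.finrank ℂ (opSys K k) := by
    intro k
    induction k with
    | zero => intro _; exact Nat.zero_le _
    | succ k ih =>
      intro hk
      have h1 : opSys K k < opSys K (k + 1) :=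
        lt_of_le_of_ne (opSys_le_succ K hK1 k) (h k (by omega))
      have h2 := Submodule.finrank_lt_finrank_of_lt (K := ℂ) h1
      have h3 := ih (by omega)
      omega
  have h4 := chain (d ^ 2 + 1) le_rfl
  have h5 : Module.finrank ℂ (opSys K (d ^ 2 + 1)) ≤ Module.finrank ℂ (Mat d) :=
    Submodule.finrank_le _
  have h6 : Module.finrank ℂ (Mat d) = d ^ 2 := by
    have := Module.finrank_matrix ℂ ℂ (Fin d) (Fin d)
    simp only [Module.finrank_self, mul_one, Fintype.card_fin] at this
    rw [pow_two]
    exact this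
  omega

end Kraus
section Span

variable {V : Type*} [AddCommMonoid V] [Module ℂ V]

lemma vanish_span_iff (f : V →ₗ[ℂ] ℂ) (s : Set V) :
    (∀ S ∈ Submodule.span ℂ s, f S = 0) ↔ (∀ S ∈ s, f S = 0) := by
  constructor
  · exact fun h S hS => h S (Submodule.subset_span hS)
  · intro h S hS
    have hle : Submodule.span ℂ s ≤ LinearMap.ker f :=
      Submodule.span_le.mpr fun x hx => LinearMap.mem_ker.mpr (h x hx)
    exact hle hS

end Span

/-- the linear functional `S ↦ ⟨x, S y⟩`. -/
noncomputable def dotFunctional {ι κ : Type*} [Fintype ι] [Fintype κ]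
    (x : ι → ℂ) (y : κ → ℂ) : Matrix ι κ ℂ →ₗ[ℂ] ℂ where
  toFun S := star x ⬝ᵥ (S *ᵥ y)
  map_add' S T := by simp [Matrix.add_mulVec, dotProduct_add]
  map_smul' c S := by simp [Matrix.smul_mulVec, dotProduct_smul]

lemma star_mulVec_dot {ι κ κ' : Type*} [Fintype ι] [Fintype κ] [Fintype κ']
    (A : Matrix ι κ ℂ) (B : Matrix ι κ' ℂ) (x : κ → ℂ) (y : κ' → ℂ) :
    star (A *ᵥ x) ⬝ᵥ (B *ᵥ y) = star x ⬝ᵥ ((Aᴴ * B) *ᵥ y) := by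
  rw [Matrix.star_mulVec, ← Matrix.dotProduct_mulVec, Matrix.mulVec_mulVec]

section Char
variable {d p : ℕ} (K : Fin p → Mat d)

lemma pow_pure_eq {Φ : Module.End ℂ (Mat d)}
    (hK : ∀ X, Φ X = ∑ i, K i * X * (K i)ᴴ) (k : ℕ) (ψ : Fin d → ℂ) :
    (Φ ^ k) (pureState ψ) = ∑ i : Fin k → Fin p, pureState (krausProd K i *ᵥ ψ) := by
  rw [pow_apply_kraus K hK]
  exact Finset.sum_congr rfl fun i _ => by
    rw [pureState_eq_outer, pureState_eq_outer, mul_outer_mul]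

lemma trace_pow_pure_eq_zero_iff {Φ : Module.End ℂ (Mat d)}
    (hK : ∀ X, Φ X = ∑ i, K i * X * (K i)ᴴ) (k : ℕ) (ψ φ : Fin d → ℂ) :
    ((Φ ^ k) (pureState ψ) * (Φ ^ k) (pureState φ)).trace = 0
      ↔ ∀ S ∈ opSys K k, star ψ ⬝ᵥ (S *ᵥ φ) = 0 := by
  rw [pow_pure_eq K hK, pow_pure_eq K hK, trace_sum_pure_mul_sum_pure]
  have h1 : ∀ (i j : Fin k → Fin p),
      star (krausProd K i *ᵥ ψ) ⬝ᵥ (krausProd K j *ᵥ φ)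
        = dotFunctional ψ φ ((krausProd K i)ᴴ * krausProd K j) := fun i j =>
    star_mulVec_dot _ _ _ _
  simp_rw [h1]
  rw [show (∀ S ∈ opSys K k, star ψ ⬝ᵥ (S *ᵥ φ) = 0)
      ↔ ∀ S ∈ opSys K k, dotFunctional ψ φ S = 0 from Iff.rfl, opSys,
    vanish_span_iff]
  constructor
  · rintro h S ⟨i, j, rfl⟩
    exact h i j
  · intro h i j
    exact h _ ⟨i, j, rfl⟩

lemma Mclassical_congr {Φ : Module.End ℂ (Mat d)}
    (hK : ∀ X, Φ X = ∑ i, K i * X * (K i)ᴴ) {N M : ℕ}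
    (h : opSys K N = opSys K M) :
    Mclassical (Φ ^ N) = Mclassical (Φ ^ M) := by
  unfold Mclassical
  congr 1
  ext m
  simp only [Set.mem_setOf_eq]
  constructor <;> rintro ⟨ψ, h1, h2⟩ <;> refine ⟨ψ, h1, fun a b hab => ?_⟩
  · exact (trace_pow_pure_eq_zero_iff K hK M _ _).mpr
      (h ▸ (trace_pow_pure_eq_zero_iff K hK N _ _).mp (h2 a b hab))
  · exact (trace_pow_pure_eq_zero_iff K hK N _ _).mpr
      (h ▸ (trace_pow_pure_eq_zero_iff K hK M _ _).mp (h2 a b hab))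

end Char
noncomputable def mulLeftRight {ι κ ι' κ' : Type*} [Fintype κ] [Fintype κ']
    (A : Matrix ι κ ℂ) (B : Matrix κ' ι' ℂ) : Matrix κ κ' ℂ →ₗ[ℂ] Matrix ι ι' ℂ where
  toFun X := A * X * B
  map_add' X Y := by simp [Matrix.mul_add, Matrix.add_mul]
  map_smul' c X := by simp [Matrix.mul_smul, Matrix.smul_mul]

section ME
variable {d p : ℕ} (K : Fin p → Mat d)

lemma tensorId_kraus {d₀ n d₁ : ℕ} {Θ : Matrix (Fin d₀) (Fin d₀) ℂ →ₗ[ℂ] Mat n}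
    {ι : Type*} [Fintype ι] (M : ι → Matrix (Fin n) (Fin d₀) ℂ)
    (hM : ∀ X, Θ X = ∑ a, M a * X * (M a)ᴴ) (ψ : Fin d₀ × Fin d₁ → ℂ) :
    tensorId Θ (pureState ψ)
      = ∑ a, pureState (fun x : Fin n × Fin d₁ => (M a *ᵥ fun l => ψ (l, x.2)) x.1) := by
  ext x y
  obtain ⟨p1, p2⟩ := x
  obtain ⟨q1, q2⟩ := y
  show Θ (Matrix.of fun k l => pureState ψ (k, p2) (l, q2)) p1 q1 = _
  have h0 : (Matrix.of fun k l => pureState ψ (k, p2) (l, q2))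
      = outer (fun l => ψ (l, p2)) (fun l => ψ (l, q2)) := rfl
  rw [h0, hM]
  simp_rw [mul_outer_mul]
  rw [Matrix.sum_apply, Matrix.sum_apply]
  exact Finset.sum_congr rfl fun a _ => rfl

lemma comp_kraus {d₀ pE : ℕ} {E : Matrix (Fin d₀) (Fin d₀) ℂ →ₗ[ℂ] Mat d}
    (F : Fin pE → Matrix (Fin d) (Fin d₀) ℂ) (hF : ∀ X, E X = ∑ c, F c * X * (F c)ᴴ)
    {Φ : Module.End ℂ (Mat d)} (hK : ∀ X, Φ X = ∑ i, K i * X * (K i)ᴴ) (k : ℕ)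
    (X : Matrix (Fin d₀) (Fin d₀) ℂ) :
    ((Φ ^ k : Module.End ℂ (Mat d)) ∘ₗ E) X = ∑ ic : (Fin k → Fin p) × Fin pE,
      (krausProd K ic.1 * F ic.2) * X * (krausProd K ic.1 * F ic.2)ᴴ := by
  rw [LinearMap.comp_apply, pow_apply_kraus K hK, Fintype.sum_prod_type]
  refine Finset.sum_congr rfl fun i _ => ?_
  rw [hF, Finset.mul_sum, Finset.sum_mul]
  refine Finset.sum_congr rfl fun c _ => ?_
  rw [Matrix.conjTranspose_mul]
  simp only [Matrix.mul_assoc]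

lemma aux_dot {dd d₀ d₁ : ℕ} (A B : Matrix (Fin dd) (Fin d₀) ℂ) (ψ : Fin d₀ × Fin d₁ → ℂ) :
    star (fun x : Fin dd × Fin d₁ => (A *ᵥ fun l => ψ (l, x.2)) x.1)
        ⬝ᵥ (fun x : Fin dd × Fin d₁ => (B *ᵥ fun l => ψ (l, x.2)) x.1)
      = ∑ x2 : Fin d₁,
          star (fun l => ψ (l, x2)) ⬝ᵥ ((Aᴴ * B) *ᵥ fun l => ψ (l, x2)) := by
  simp_rw [← star_mulVec_dot]
  rw [dotProduct, Fintype.sum_prod_type]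
  rw [Finset.sum_comm]
  rfl

lemma ME_trace_zero_iff {d₀ d₁ pE pE' : ℕ}
    {E E' : Matrix (Fin d₀) (Fin d₀) ℂ →ₗ[ℂ] Mat d}
    (F : Fin pE → Matrix (Fin d) (Fin d₀) ℂ) (hF : ∀ X, E X = ∑ c, F c * X * (F c)ᴴ)
    (G : Fin pE' → Matrix (Fin d) (Fin d₀) ℂ) (hG : ∀ X, E' X = ∑ c, G c * X * (G c)ᴴ)
    {Φ : Module.End ℂ (Mat d)} (hK : ∀ X, Φ X = ∑ i, K i * X * (K i)ᴴ)
    (k : ℕ) (ψ : Fin d₀ × Fin d₁ → ℂ) :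
    (tensorId ((Φ ^ k : Module.End ℂ (Mat d)) ∘ₗ E) (pureState ψ)
        * tensorId ((Φ ^ k : Module.End ℂ (Mat d)) ∘ₗ E') (pureState ψ)).trace = 0
    ↔ ∀ (c : Fin pE) (e : Fin pE'), ∀ S ∈ opSys K k,
        (∑ x2 : Fin d₁, dotFunctional (fun l => ψ (l, x2)) (fun l => ψ (l, x2)))
          ((F c)ᴴ * S * G e) = 0 := by
  rw [tensorId_kraus _ (comp_kraus K F hF hK k) ψ,
    tensorId_kraus _ (comp_kraus K G hG hK k) ψ, trace_sum_pure_mul_sum_pure]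
  have key : ∀ (a : (Fin k → Fin p) × Fin pE) (b : (Fin k → Fin p) × Fin pE'),
      star (fun x : Fin d × Fin d₁ => ((krausProd K a.1 * F a.2) *ᵥ fun l => ψ (l, x.2)) x.1)
          ⬝ᵥ (fun x : Fin d × Fin d₁ => ((krausProd K b.1 * G b.2) *ᵥ fun l => ψ (l, x.2)) x.1)
        = ((∑ x2 : Fin d₁, dotFunctional (fun l => ψ (l, x2)) (fun l => ψ (l, x2))) ∘ₗ
            mulLeftRight (F a.2)ᴴ (G b.2)) ((krausProd K a.1)ᴴ * krausProd K b.1) := by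
    intro a b
    rw [aux_dot]
    have h1 : (krausProd K a.1 * F a.2)ᴴ * (krausProd K b.1 * G b.2)
        = (F a.2)ᴴ * ((krausProd K a.1)ᴴ * krausProd K b.1) * G b.2 := by
      rw [Matrix.conjTranspose_mul]
      simp only [Matrix.mul_assoc]
    rw [h1]
    simp only [LinearMap.comp_apply, LinearMap.sum_apply, dotFunctional, mulLeftRight,
      LinearMap.coe_mk, AddHom.coe_mk]
  simp_rw [key]
  constructor
  · intro h c e
    rw [show opSys K k = Submodule.span ℂ
        {X | ∃ i j : Fin k → Fin p, X = (krausProd K i)ᴴ * krausProd K j} from rfl]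
    intro S hS
    have h2 := (vanish_span_iff ((∑ x2 : Fin d₁,
        dotFunctional (fun l => ψ (l, x2)) (fun l => ψ (l, x2))) ∘ₗ
        mulLeftRight (F c)ᴴ (G e)) _).mpr ?_ S hS
    · exact h2
    · rintro S' ⟨i, j, rfl⟩
      exact h (i, c) (j, e)
  · intro h a b
    exact h a.2 b.2 _ (Submodule.subset_span ⟨a.1, b.1, rfl⟩)

lemma MEclassical_congr {Φ : Module.End ℂ (Mat d)}
    (hK : ∀ X, Φ X = ∑ i, K i * X * (K i)ᴴ) {N M : ℕ}
    (h : opSys K N = opSys K M) :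
    MEclassical (Φ ^ N) = MEclassical (Φ ^ M) := by
  have main : ∀ N M : ℕ, opSys K N = opSys K M →
      ∀ m₀, (∃ (d₀ d₁ : ℕ) (ψ : Fin d₀ × Fin d₁ → ℂ), 0 < d₀ ∧ 0 < d₁ ∧ IsUnitVec ψ ∧
        ∃ E : Fin m₀ → (Matrix (Fin d₀) (Fin d₀) ℂ →ₗ[ℂ] Mat d),
          (∀ m, IsChannel (E m)) ∧ ∀ m m', m ≠ m' →
            (tensorId ((Φ ^ N : Module.End ℂ (Mat d)) ∘ₗ E m) (pureState ψ)
              * tensorId ((Φ ^ N : Module.End ℂ (Mat d)) ∘ₗ E m') (pureState ψ)).trace = 0) →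
      (∃ (d₀ d₁ : ℕ) (ψ : Fin d₀ × Fin d₁ → ℂ), 0 < d₀ ∧ 0 < d₁ ∧ IsUnitVec ψ ∧
        ∃ E : Fin m₀ → (Matrix (Fin d₀) (Fin d₀) ℂ →ₗ[ℂ] Mat d),
          (∀ m, IsChannel (E m)) ∧ ∀ m m', m ≠ m' →
            (tensorId ((Φ ^ M : Module.End ℂ (Mat d)) ∘ₗ E m) (pureState ψ)
              * tensorId ((Φ ^ M : Module.End ℂ (Mat d)) ∘ₗ E m') (pureState ψ)).trace = 0) := by
    intro N M h m₀
    rintro ⟨d₀, d₁, ψ, h0, h1, h2, E, hE, hcond⟩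
    refine ⟨d₀, d₁, ψ, h0, h1, h2, E, hE, fun m m' hmm' => ?_⟩
    obtain ⟨pF, F, hF, _⟩ := hE m
    obtain ⟨pG, G, hG, _⟩ := hE m'
    exact (ME_trace_zero_iff K F hF G hG hK M ψ).mpr
      (h ▸ (ME_trace_zero_iff K F hF G hG hK N ψ).mp (hcond m m' hmm'))
  unfold MEclassical
  congr 1
  ext m₀
  simp only [Set.mem_setOf_eq]
  exact ⟨main N M h m₀, main M N h.symm m₀⟩

end ME
section Proj
variable {m : ℕ}

lemma conjTranspose_pureState (u : Fin m → ℂ) : (pureState u)ᴴ = pureState u := by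
  ext i j
  simp [pureState, Matrix.conjTranspose_apply, mul_comm]

lemma pureState_mulVec (u x : Fin m → ℂ) :
    pureState u *ᵥ x = (star u ⬝ᵥ x) • u := by
  ext j
  simp only [pureState, Matrix.mulVec, dotProduct, Matrix.of_apply, Pi.smul_apply,
    Pi.star_apply, smul_eq_mul, Finset.sum_mul, Finset.mul_sum]
  exact Finset.sum_congr rfl fun l _ => by ring

lemma euclid_inner_eq (x y : EuclideanSpace ℂ (Fin m)) :
    (inner ℂ x y : ℂ) = star (x : Fin m → ℂ) ⬝ᵥ (y : Fin m → ℂ) := by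
  simp [PiLp.inner_apply, RCLike.inner_apply, dotProduct, mul_comm]

lemma sum_mulVec' {ι α β : Type*} [Fintype ι] [Fintype β] (A : ι → Matrix α β ℂ)
    (x : β → ℂ) : (∑ i, A i) *ᵥ x = ∑ i, A i *ᵥ x := by
  ext j
  simp only [Matrix.mulVec, dotProduct, Matrix.sum_apply, Finset.sum_apply,
    Finset.sum_mul]
  exact Finset.sum_comm

lemma exists_projMat (C : Submodule ℂ (Fin m → ℂ)) :
    ∃ P : Matrix (Fin m) (Fin m) ℂ, Pᴴ = P ∧ P * P = P ∧
      (∀ x ∈ C, P *ᵥ x = x) ∧ (∀ x, P *ᵥ x ∈ C) := by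
  let e : EuclideanSpace ℂ (Fin m) ≃ₗ[ℂ] (Fin m → ℂ) :=
    WithLp.linearEquiv 2 ℂ (Fin m → ℂ)
  let C' : Submodule ℂ (EuclideanSpace ℂ (Fin m)) := C.comap (e : _ →ₗ[ℂ] _)
  let b := stdOrthonormalBasis ℂ C'
  let u : Fin (Module.finrank ℂ C') → Fin m → ℂ := fun i => e ((b i : C') : EuclideanSpace ℂ (Fin m))
  have hu_mem : ∀ i, u i ∈ C := fun i => Submodule.mem_comap.mp (b i).2
  have hON : ∀ i j, star (u i) ⬝ᵥ u j = if i = j then 1 else 0 := by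
    intro i j
    have h1 := orthonormal_iff_ite.mp b.orthonormal i j
    rw [Submodule.coe_inner, euclid_inner_eq] at h1
    exact h1
  have hexp : ∀ x ∈ C, ∑ i, (star (u i) ⬝ᵥ x) • u i = x := by
    intro x hx
    have hx' : (e.symm x : EuclideanSpace ℂ (Fin m)) ∈ C' := by
      simp only [C', Submodule.mem_comap]
      simpa using hx
    set x' : C' := ⟨e.symm x, hx'⟩
    have h2 := b.sum_repr x'
    have h3 : ∀ i, b.repr x' i = star (u i) ⬝ᵥ x := by
      intro i
      rw [b.repr_apply_apply, Submodule.coe_inner, euclid_inner_eq]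
      congr 1
    have hstep : e ((∑ i, b.repr x' i • b i : C') : EuclideanSpace ℂ (Fin m))
        = ∑ i, b.repr x' i • u i := by
      push_cast
      rw [map_sum]
      exact Finset.sum_congr rfl fun i _ => by rw [_root_.map_smul]
    rw [h2] at hstep
    have h6 : e ((x' : EuclideanSpace ℂ (Fin m))) = x := by
      simp [x']
    calc ∑ i, (star (u i) ⬝ᵥ x) • u i
        = ∑ i, b.repr x' i • u i :=
          (Finset.sum_congr rfl fun i _ => by rw [h3]).symm
      _ = x := by rw [← hstep, h6]
  refine ⟨∑ i, pureState (u i), ?_, ?_, ?_, ?_⟩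
  · rw [Matrix.conjTranspose_sum]
    exact Finset.sum_congr rfl fun i _ => conjTranspose_pureState _
  · rw [Finset.sum_mul_sum]
    simp_rw [pureState_eq_outer, outer_mul_outer, hON, ite_smul, one_smul, zero_smul]
    simp [Finset.sum_ite_eq]
  · intro x hx
    rw [sum_mulVec']
    simp_rw [pureState_mulVec]
    exact hexp x hx
  · intro x
    rw [sum_mulVec']
    simp_rw [pureState_mulVec]
    exact Submodule.sum_mem _ fun i _ => Submodule.smul_mem _ _ (hu_mem i)

end Proj
section KLf
variable {m : ℕ}

lemma sum_mul_star_eq_zero_iff {ι : Type*} [Fintype ι] (f : ι → ℂ) :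
    ∑ i, f i * star (f i) = 0 ↔ ∀ i, f i = 0 := by
  have h : ∀ i, f i * star (f i) = (Complex.normSq (f i) : ℂ) := fun i => by
    rw [← Complex.mul_conj]; rfl
  simp_rw [h]
  rw [← Complex.ofReal_sum, Complex.ofReal_eq_zero]
  constructor
  · intro h0 i
    have := (Finset.sum_eq_zero_iff_of_nonneg
      (fun i _ => Complex.normSq_nonneg (f i))).mp h0 i (Finset.mem_univ i)
    exact Complex.normSq_eq_zero.mp this
  · intro h0
    simp [fun i => Complex.normSq_eq_zero.mpr (h0 i)]

lemma dot_sum {ι κ : Type*} [Fintype ι] [Fintype κ] (x : κ → ℂ) (f : ι → κ → ℂ) :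
    x ⬝ᵥ (∑ i, f i) = ∑ i, x ⬝ᵥ f i := by
  simp only [dotProduct, Finset.sum_apply, Finset.mul_sum]
  exact Finset.sum_comm

lemma star_dot_self_eq_zero {x : Fin m → ℂ} (h : star x ⬝ᵥ x = 0) : x = 0 :=
  dotProduct_star_self_eq_zero.mp h

/-- if a sum of pure states equals the pure state of a unit vector, each vector in the
sum is parallel to it. -/
lemma pure_decomp {ι : Type*} [Fintype ι] (v : ι → Fin m → ℂ) (ψ : Fin m → ℂ)
    (hψ : IsUnitVec ψ) (h : ∑ t, pureState (v t) = pureState ψ) (t : ι) :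
    v t = (star ψ ⬝ᵥ v t) • ψ := by
  have hψ1 : star ψ ⬝ᵥ ψ = 1 := by
    rw [← hψ]; rfl
  set w : Fin m → ℂ := v t - (star ψ ⬝ᵥ v t) • ψ with hw_def
  have hψw : star ψ ⬝ᵥ w = 0 := by
    rw [hw_def, dotProduct_sub, dotProduct_smul, hψ1]
    simp
  have hq : star w ⬝ᵥ (pureState ψ *ᵥ w) = 0 := by
    rw [pureState_mulVec, dotProduct_smul, hψw]
    simp
  rw [← h, sum_mulVec'] at hq
  simp_rw [pureState_mulVec] at hq
  rw [dot_sum] at hq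
  have hterm : ∀ s, star w ⬝ᵥ ((star (v s) ⬝ᵥ w) • v s)
      = (star (v s) ⬝ᵥ w) * star (star (v s) ⬝ᵥ w) := by
    intro s
    rw [dotProduct_smul]
    have : star w ⬝ᵥ v s = star (star (v s) ⬝ᵥ w) := by
      simp only [dotProduct, star_sum, star_mul', Pi.star_apply, star_star]
      exact Finset.sum_congr rfl fun i _ => by ring
    rw [this]
    rfl
  simp_rw [hterm] at hq
  have hz : star (v t) ⬝ᵥ w = 0 := (sum_mul_star_eq_zero_iff _).mp hq t
  have hww : star w ⬝ᵥ w = 0 := by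
    have hsw : star w = star (v t) - star (star ψ ⬝ᵥ v t) • star ψ := by
      rw [hw_def]
      ext i
      simp [star_mul', mul_comm]
    rw [hsw, sub_dotProduct, smul_dotProduct, hz, hψw]
    simp
  have hw0 := star_dot_self_eq_zero hww
  rw [hw_def] at hw0
  exact sub_eq_zero.mp hw0

lemma exists_uniform_scalar (C : Submodule ℂ (Fin m → ℂ)) (T : Matrix (Fin m) (Fin m) ℂ)
    (h : ∀ φ ∈ C, ∃ k : ℂ, T *ᵥ φ = k • φ) : ∃ k : ℂ, ∀ φ ∈ C, T *ᵥ φ = k • φ := by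
  by_cases hC : ∀ φ ∈ C, φ = (0 : Fin m → ℂ)
  · exact ⟨0, fun φ hφ => by rw [hC φ hφ]; simp⟩
  push_neg at hC
  obtain ⟨ψ₀, hψ₀C, hψ₀⟩ := hC
  obtain ⟨k₀, hk₀⟩ := h ψ₀ hψ₀C
  refine ⟨k₀, fun φ hφ => ?_⟩
  by_cases hz : φ = 0
  · simp [hz]
  obtain ⟨k₁, hk₁⟩ := h φ hφ
  by_cases hsp : ∃ a : ℂ, φ = a • ψ₀
  · obtain ⟨a, rfl⟩ := hsp
    rw [Matrix.mulVec_smul, hk₀, smul_comm]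
  · obtain ⟨k₂, hk₂⟩ := h (ψ₀ + φ) (C.add_mem hψ₀C hφ)
    rw [Matrix.mulVec_add, hk₀, hk₁, smul_add] at hk₂
    have hEq : (k₀ - k₂) • ψ₀ = (k₂ - k₁) • φ := by
      rw [sub_smul, sub_smul, sub_eq_sub_iff_add_eq_add, hk₂]
      abel
    by_cases hk : k₂ = k₁
    · subst hk
      rw [sub_self, zero_smul] at hEq
      have h0 : k₀ = k₂ := by
        rcases smul_eq_zero.mp hEq with h' | h'
        · exact sub_eq_zero.mp h'
        · exact absurd h' hψ₀
      rw [hk₁, h0]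
    · exfalso
      apply hsp
      refine ⟨(k₂ - k₁)⁻¹ * (k₀ - k₂), ?_⟩
      calc φ = (k₂ - k₁)⁻¹ • ((k₂ - k₁) • φ) := by
            rw [smul_smul, inv_mul_cancel₀ (sub_ne_zero.mpr hk), one_smul]
        _ = (k₂ - k₁)⁻¹ • ((k₀ - k₂) • ψ₀) := by rw [hEq]
        _ = ((k₂ - k₁)⁻¹ * (k₀ - k₂)) • ψ₀ := by rw [smul_smul]

lemma matrix_eq_of_forall_dot {ι κ : Type*} [Fintype ι] [Fintype κ] [DecidableEq ι]
    [DecidableEq κ] {A B : Matrix ι κ ℂ}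
    (h : ∀ x y, star x ⬝ᵥ (A *ᵥ y) = star x ⬝ᵥ (B *ᵥ y)) : A = B := by
  ext i j
  have := h (Pi.single i 1) (Pi.single j 1)
  simpa [Matrix.mulVec_single, dotProduct, Pi.single_apply, Finset.sum_ite_eq,
    apply_ite] using this

end KLf
section KLA
variable {m : ℕ}

lemma KL_forward {ι κ : Type*} [Fintype ι] [Fintype κ]
    (C : Submodule ℂ (Fin m → ℂ)) {P : Matrix (Fin m) (Fin m) ℂ}
    (hP1 : Pᴴ = P) (hP2 : P * P = P) (hP4 : ∀ x, P *ᵥ x ∈ C)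
    (L : ι → Matrix (Fin m) (Fin m) ℂ) (R : κ → Matrix (Fin m) (Fin m) ℂ)
    (hR1 : ∑ c, (R c)ᴴ * R c = 1)
    (hpar : ∀ (c : κ) (i : ι), ∀ φ ∈ C, ∃ kk : ℂ, (R c * L i) *ᵥ φ = kk • φ)
    (a b : ι) : ∃ lam : ℂ, P * ((L a)ᴴ * L b) * P = lam • P := by
  have huni : ∀ (c : κ) (i : ι), ∃ kk : ℂ, ∀ φ ∈ C, (R c * L i) *ᵥ φ = kk • φ :=
    fun c i => exists_uniform_scalar C _ (hpar c i)
  choose kk hkk using huni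
  refine ⟨∑ c, star (kk c a) * kk c b, ?_⟩
  apply matrix_eq_of_forall_dot
  intro x y
  have hsplit : (L a)ᴴ * L b = ∑ c, (R c * L a)ᴴ * (R c * L b) := by
    simp_rw [Matrix.conjTranspose_mul]
    calc (L a)ᴴ * L b = (L a)ᴴ * (∑ c, (R c)ᴴ * R c) * L b := by
          rw [hR1, Matrix.mul_one]
      _ = ∑ c, (L a)ᴴ * (R c)ᴴ * (R c * L b) := by
          rw [Finset.mul_sum, Finset.sum_mul]
          exact Finset.sum_congr rfl fun c _ => by noncomm_ring
  have lhs1 : star x ⬝ᵥ ((P * ((L a)ᴴ * L b) * P) *ᵥ y)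
      = star (P *ᵥ x) ⬝ᵥ (((L a)ᴴ * L b) *ᵥ (P *ᵥ y)) := by
    rw [star_mulVec_dot, hP1, Matrix.mulVec_mulVec, Matrix.mul_assoc]
  have hdot : star (P *ᵥ x) ⬝ᵥ (((L a)ᴴ * L b) *ᵥ (P *ᵥ y))
      = (∑ c, star (kk c a) * kk c b) * (star (P *ᵥ x) ⬝ᵥ (P *ᵥ y)) := by
    rw [hsplit, sum_mulVec', dot_sum, Finset.sum_mul]
    refine Finset.sum_congr rfl fun c _ => ?_
    rw [← star_mulVec_dot, hkk c a _ (hP4 x), hkk c b _ (hP4 y), star_smul,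
      smul_dotProduct, dotProduct_smul, smul_eq_mul, smul_eq_mul]
    ring
  have hPP : star (P *ᵥ x) ⬝ᵥ (P *ᵥ y) = star x ⬝ᵥ (P *ᵥ y) := by
    rw [star_mulVec_dot, hP1, hP2]
  rw [lhs1, hdot, hPP, Matrix.smul_mulVec, dotProduct_smul]
  rfl

end KLA
section ChanHelpers

lemma matrix_eq_of_mulVec {ι κ : Type*} [Fintype κ] [DecidableEq κ]
    {A B : Matrix ι κ ℂ} (h : ∀ x, A *ᵥ x = B *ᵥ x) : A = B := by
  ext i j
  have := congrFun (h (Pi.single j 1)) i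
  simpa [Matrix.mulVec_single] using this

lemma isChannel_of_family {m n : ℕ} {ι : Type*} [Fintype ι]
    (Φ : Matrix (Fin m) (Fin m) ℂ →ₗ[ℂ] Mat n) (G : ι → Matrix (Fin n) (Fin m) ℂ)
    (hG : ∀ X, Φ X = ∑ i, G i * X * (G i)ᴴ) (hG1 : ∑ i, (G i)ᴴ * G i = 1) :
    IsChannel Φ := by
  refine ⟨Fintype.card ι, fun j => G ((Fintype.equivFin ι).symm j), fun X => ?_, ?_⟩
  · rw [hG, ← Equiv.sum_comp (Fintype.equivFin ι).symm
      (fun i => G i * X * (G i)ᴴ)]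
  · rw [← hG1, ← Equiv.sum_comp (Fintype.equivFin ι).symm
      (fun i => (G i)ᴴ * G i)]

lemma smul_cancel_of_ne_zero {m n : ℕ} {A : Matrix (Fin m) (Fin n) ℂ} (hA : A ≠ 0)
    {c c' : ℂ} (h : c • A = c' • A) : c = c' := by
  by_contra hne
  have h2 : (c - c') • A = 0 := by rw [sub_smul, h, sub_self]
  rcases smul_eq_zero.mp h2 with h' | h'
  · exact hne (sub_eq_zero.mp h')
  · exact hA h'

lemma trace_conjTranspose_mul_self {ι κ : Type*} [Fintype ι] [Fintype κ]
    (A : Matrix ι κ ℂ) :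
    (Aᴴ * A).trace = ((∑ j, ∑ i, Complex.normSq (A i j) : ℝ) : ℂ) := by
  push_cast
  simp only [Matrix.trace, Matrix.diag, Matrix.mul_apply, Matrix.conjTranspose_apply]
  refine Finset.sum_congr rfl fun j _ => Finset.sum_congr rfl fun i _ => ?_
  rw [Complex.star_def, Complex.normSq_eq_conj_mul_self]

lemma trace_projMat_ne_zero {m : ℕ} {P : Matrix (Fin m) (Fin m) ℂ}
    (hP1 : Pᴴ = P) (hP2 : P * P = P) (hP0 : P ≠ 0) :
    ∃ t : ℝ, 0 < t ∧ P.trace = (t : ℂ) := by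
  have hPP : P = Pᴴ * P := by rw [hP1, hP2]
  refine ⟨∑ j, ∑ i, Complex.normSq (P i j), ?_, by
    conv_lhs => rw [hPP]
    rw [trace_conjTranspose_mul_self]⟩
  rcases lt_or_eq_of_le (Finset.sum_nonneg fun j _ =>
    Finset.sum_nonneg fun i _ => Complex.normSq_nonneg (P i j)) with h | h
  · exact h
  · exfalso
    apply hP0
    ext i j
    have h1 := (Finset.sum_eq_zero_iff_of_nonneg fun j _ =>
      Finset.sum_nonneg fun i _ => Complex.normSq_nonneg (P i j)).mp h.symm j
      (Finset.mem_univ j)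
    have h2 := (Finset.sum_eq_zero_iff_of_nonneg fun i _ =>
      Complex.normSq_nonneg (P i j)).mp h1 i (Finset.mem_univ i)
    simpa using Complex.normSq_eq_zero.mp h2

/-- state supported in `C` is fixed by multiplication by the projection. -/
lemma state_supported {m : ℕ} {C : Submodule ℂ (Fin m → ℂ)}
    {P : Matrix (Fin m) (Fin m) ℂ} (hP1 : Pᴴ = P) (hP3 : ∀ x ∈ C, P *ᵥ x = x)
    {ρ : Mat m} (hρ : ρ.PosSemidef) (hr : LinearMap.range ρ.mulVecLin ≤ C) :
    P * ρ = ρ ∧ ρ * P = ρ := by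
  have h1 : P * ρ = ρ := by
    apply matrix_eq_of_mulVec
    intro x
    rw [← Matrix.mulVec_mulVec]
    exact hP3 _ (hr ⟨x, rfl⟩)
  refine ⟨h1, ?_⟩
  have h2 := congrArg Matrix.conjTranspose h1
  rw [Matrix.conjTranspose_mul, hP1, hρ.1.eq] at h2
  exact h2

end ChanHelpers
section KLB
variable {m : ℕ} {ι : Type*} [Fintype ι] [DecidableEq ι]

noncomputable def krausChannel (G : ι → Mat m) : Mat m →ₗ[ℂ] Mat m where
  toFun X := ∑ i, G i * X * (G i)ᴴ
  map_add' X Y := by simp [Matrix.mul_add, Matrix.add_mul, Finset.sum_add_distrib]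
  map_smul' c X := by simp [Matrix.mul_smul, Matrix.smul_mul, Finset.smul_sum]

lemma krausChannel_apply (G : ι → Mat m) (X : Mat m) :
    krausChannel G X = ∑ i, G i * X * (G i)ᴴ := rfl

lemma triple_expand (f g : ι → ℂ) (A B : ι → Mat m) (X : Mat m) :
    (∑ c, f c • A c) * X * (∑ e, g e • B e)
      = ∑ c, ∑ e, (f c * g e) • (A c * X * B e) := by
  rw [Finset.sum_mul, Finset.sum_mul]
  refine Finset.sum_congr rfl fun c _ => ?_
  rw [Finset.mul_sum]
  refine Finset.sum_congr rfl fun e _ => ?_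
  rw [Matrix.smul_mul, Matrix.smul_mul, Matrix.mul_smul, smul_smul]

lemma sum_comm_collapse {V : Matrix ι ι ℂ} (hV : V * Vᴴ = 1) (T : ι → ι → Mat m) :
    ∑ a, ∑ c, ∑ e, (V c a * star (V e a)) • T c e = ∑ c, T c c := by
  rw [Finset.sum_comm]
  have h2 : ∀ c, ∑ a, ∑ e, (V c a * star (V e a)) • T c e
      = ∑ e, (∑ a, V c a * star (V e a)) • T c e := by
    intro c
    rw [Finset.sum_comm]
    exact Finset.sum_congr rfl fun e _ => (Finset.sum_smul).symm
  simp_rw [h2]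
  have h1 : ∀ c e, ∑ a, V c a * star (V e a) = (1 : Matrix ι ι ℂ) c e := by
    intro c e
    rw [← hV, Matrix.mul_apply]
    rfl
  simp_rw [h1, Matrix.one_apply, ite_smul, one_smul, zero_smul]
  simp

lemma sandwich_sum (P : Mat m) (f : ι → ι → ℂ) (T : ι → ι → Mat m) :
    P * (∑ c, ∑ e, f c e • T c e) * P = ∑ c, ∑ e, f c e • (P * T c e * P) := by
  rw [Finset.mul_sum, Finset.sum_mul]
  refine Finset.sum_congr rfl fun c _ => ?_
  rw [Finset.mul_sum, Finset.sum_mul]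
  refine Finset.sum_congr rfl fun e _ => ?_
  rw [Matrix.mul_smul, Matrix.smul_mul]

lemma KL_backward (C : Submodule ℂ (Fin m → ℂ)) {P : Matrix (Fin m) (Fin m) ℂ}
    (hP1 : Pᴴ = P) (hP2 : P * P = P) (hP3 : ∀ x ∈ C, P *ᵥ x = x) (hP0 : P ≠ 0)
    (Φ' : Mat m →ₗ[ℂ] Mat m) (L : ι → Mat m)
    (hL : ∀ X, Φ' X = ∑ a, L a * X * (L a)ᴴ) (hL1 : ∑ a, (L a)ᴴ * L a = 1)
    (hKL : ∀ a b, ∃ lam : ℂ, P * ((L a)ᴴ * L b) * P = lam • P) :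
    Correctable Φ' C := by
  classical
  choose μf hμ using hKL
  set μ : Matrix ι ι ℂ := Matrix.of μf with hμdef
  have hμapp : ∀ a b, μ a b = μf a b := fun a b => rfl
  obtain ⟨t, ht, htr⟩ := trace_projMat_ne_zero hP1 hP2 hP0
  -- `μ` is Hermitian
  have hμstar : ∀ a b, star (μf b a) = μf a b := by
    intro a b
    have h3 := congrArg Matrix.conjTranspose (hμ b a)
    rw [Matrix.conjTranspose_smul, hP1] at h3
    have h4 : (P * ((L b)ᴴ * L a) * P)ᴴ = P * ((L a)ᴴ * L b) * P := by
      simp only [Matrix.conjTranspose_mul, Matrix.conjTranspose_conjTranspose, hP1]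
      simp only [Matrix.mul_assoc]
    rw [h4] at h3
    exact smul_cancel_of_ne_zero hP0 (h3.symm.trans (hμ a b))
  have hμH : μ.IsHermitian := by
    ext a b
    rw [Matrix.conjTranspose_apply]
    exact hμstar a b
  -- `μ` is positive semidefinite
  have hμPSD : μ.PosSemidef := by
    refine Matrix.posSemidef_iff_dotProduct_mulVec.mpr ⟨hμH, fun x => ?_⟩
    set M : Matrix (Fin m) (Fin m) ℂ := ∑ a, x a • (L a * P) with hM
    have hMH : Mᴴ = ∑ a, star (x a) • (P * (L a)ᴴ) := by
      rw [hM, Matrix.conjTranspose_sum]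
      refine Finset.sum_congr rfl fun a _ => ?_
      rw [Matrix.conjTranspose_smul, Matrix.conjTranspose_mul, hP1]
    have hprod : ∀ a b, (P * (L a)ᴴ) * (L b * P) = μf a b • P := by
      intro a b
      rw [← hμ a b]
      simp only [Matrix.mul_assoc]
    have hMM : Mᴴ * M = (star x ⬝ᵥ (μ *ᵥ x)) • P := by
      rw [hMH, hM, Finset.sum_mul_sum]
      have hterm : ∀ a b, (star (x a) • (P * (L a)ᴴ)) * (x b • (L b * P))
          = (star (x a) * (μf a b * x b)) • P := by
        intro a b
        rw [Matrix.smul_mul, Matrix.mul_smul, smul_smul, hprod, smul_smul]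
        congr 1
        ring
      simp_rw [hterm]
      rw [show (star x ⬝ᵥ (μ *ᵥ x)) = ∑ a, ∑ b, star (x a) * (μf a b * x b) from ?_]
      · rw [Finset.sum_smul]
        refine Finset.sum_congr rfl fun a _ => ?_
        rw [Finset.sum_smul]
      · simp only [dotProduct, Matrix.mulVec, Pi.star_apply, Finset.mul_sum]
        rfl
    have h5 := congrArg Matrix.trace hMM
    rw [Matrix.trace_smul, htr, trace_conjTranspose_mul_self, smul_eq_mul] at h5
    have hdot : star x ⬝ᵥ (μ *ᵥ x)
        = (((∑ j, ∑ i, Complex.normSq (M i j)) / t : ℝ) : ℂ) := by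
      rw [eq_comm, Complex.ofReal_div, div_eq_iff (by exact_mod_cast ht.ne')]
      exact h5
    rw [hdot, Complex.zero_le_real]
    exact div_nonneg (Finset.sum_nonneg fun j _ => Finset.sum_nonneg fun i _ =>
      Complex.normSq_nonneg _) ht.le
  -- eigendecomposition of `μ`
  set V : Matrix ι ι ℂ := (hμH.eigenvectorUnitary : Matrix ι ι ℂ) with hVdef
  set dg : ι → ℝ := hμH.eigenvalues with hdgdef
  have hdnn : ∀ a, 0 ≤ dg a := fun a => hμPSD.eigenvalues_nonneg a
  have hUmem := hμH.eigenvectorUnitary.2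
  rw [Unitary.mem_iff] at hUmem
  have hVV : V * Vᴴ = 1 := by
    rw [← Matrix.star_eq_conjTranspose]
    exact hUmem.2
  have hVV' : Vᴴ * V = 1 := by
    rw [← Matrix.star_eq_conjTranspose]
    exact hUmem.1
  have hspec : μ = V * Matrix.diagonal (RCLike.ofReal ∘ dg) * Vᴴ := by
    rw [← Matrix.star_eq_conjTranspose]
    exact hμH.spectral_theorem
  have hdiag : Vᴴ * μ * V = Matrix.diagonal (RCLike.ofReal ∘ dg) := by
    rw [hspec]
    simp only [← Matrix.mul_assoc]
    rw [hVV', Matrix.one_mul, Matrix.mul_assoc, hVV', Matrix.mul_one]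
  set D : ι → ℂ := fun a => ((dg a : ℝ) : ℂ) with hD
  set Lt : ι → Mat m := fun a => ∑ c, V c a • L c with hLt
  have hLtH : ∀ a, (Lt a)ᴴ = ∑ c, star (V c a) • (L c)ᴴ := by
    intro a
    rw [hLt]
    rw [Matrix.conjTranspose_sum]
    exact Finset.sum_congr rfl fun c _ => Matrix.conjTranspose_smul _ _
  have key1' : ∀ a b, P * ((Lt a)ᴴ * Lt b) * P = (if a = b then D a else 0) • P := by
    intro a b
    have e1 : (Lt a)ᴴ * Lt b = ∑ c, ∑ e, (star (V c a) * V e b) • ((L c)ᴴ * L e) := by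
      rw [hLtH, hLt]
      rw [Finset.sum_mul_sum]
      refine Finset.sum_congr rfl fun c _ => Finset.sum_congr rfl fun e _ => ?_
      rw [Matrix.smul_mul, Matrix.mul_smul, smul_smul]
    rw [e1, sandwich_sum]
    simp_rw [hμ, smul_smul]
    have e2 : (if a = b then D a else 0) = (Vᴴ * μ * V) a b := by
      rw [hdiag, Matrix.diagonal_apply]
      by_cases hab : a = b <;> simp [hab, hD]
    rw [e2]
    have e3 : (Vᴴ * μ * V) a b = ∑ c, ∑ e, star (V c a) * V e b * μf c e := by
      rw [Matrix.mul_apply]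
      simp_rw [Matrix.mul_apply, Finset.sum_mul]
      rw [Finset.sum_comm]
      refine Finset.sum_congr rfl fun c _ => Finset.sum_congr rfl fun e _ => ?_
      rw [Matrix.conjTranspose_apply, hμapp]
      ring
    rw [e3, Finset.sum_smul]
    exact Finset.sum_congr rfl fun c _ => by rw [Finset.sum_smul]
  have hLtL : ∀ X : Mat m, ∑ a, Lt a * X * (Lt a)ᴴ = ∑ c, L c * X * (L c)ᴴ := by
    intro X
    have e1 : ∀ a, Lt a * X * (Lt a)ᴴ
        = ∑ c, ∑ e, (V c a * star (V e a)) • (L c * X * (L e)ᴴ) := by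
      intro a
      rw [hLtH, hLt]
      exact triple_expand _ _ _ _ X
    simp_rw [e1]
    exact sum_comm_collapse hVV _
  have hLtsum : ∑ a, (Lt a)ᴴ * Lt a = 1 := by
    have e1 : ∀ a, (Lt a)ᴴ * Lt a
        = ∑ e, ∑ c, (V e a * star (V c a)) • ((L c)ᴴ * L e) := by
      intro a
      rw [hLtH, hLt, Finset.sum_mul_sum]
      rw [Finset.sum_comm]
      refine Finset.sum_congr rfl fun e _ => Finset.sum_congr rfl fun c _ => ?_
      rw [Matrix.smul_mul, Matrix.mul_smul, smul_smul, mul_comm]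
    simp_rw [e1]
    rw [sum_comm_collapse hVV (fun e c => (L c)ᴴ * L e)]
    exact hL1
  set sq : ι → ℝ := fun a => Real.sqrt (dg a) with hsqdef
  have hinv : ∀ a, (((sq a)⁻¹ : ℝ) : ℂ) * (((sq a)⁻¹ : ℝ) : ℂ)
      = (((dg a)⁻¹ : ℝ) : ℂ) := by
    intro a
    norm_cast
    rw [← mul_inv, hsqdef]
    rw [Real.mul_self_sqrt (hdnn a)]
  have key2 : ∀ a c, (P * (Lt a)ᴴ) * (Lt c * P) = (if a = c then D a else 0) • P := by
    intro a c
    rw [← key1' a c]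
    simp only [Matrix.mul_assoc]
  have hLP0 : ∀ a, dg a = 0 → Lt a * P = 0 := by
    intro a ha
    have h6 := key1' a a
    rw [if_pos rfl, hD] at h6
    simp only [ha, Complex.ofReal_zero, zero_smul] at h6
    have h7 : (Lt a * P)ᴴ * (Lt a * P) = 0 := by
      calc (Lt a * P)ᴴ * (Lt a * P) = P * ((Lt a)ᴴ * Lt a) * P := by
            rw [Matrix.conjTranspose_mul, hP1]
            simp only [Matrix.mul_assoc]
        _ = 0 := h6
    exact Matrix.conjTranspose_mul_self_eq_zero.mp h7
  set Q : Mat m := ∑ a, (((dg a)⁻¹ : ℝ) : ℂ) • (Lt a * P * (Lt a)ᴴ) with hQ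
  have hQP : ∀ c, Q * (Lt c * P) = Lt c * P := by
    intro c
    rw [hQ, Finset.sum_mul]
    have e3 : ∀ a, ((((dg a)⁻¹ : ℝ) : ℂ) • (Lt a * P * (Lt a)ᴴ)) * (Lt c * P)
        = (((dg a)⁻¹ : ℝ) : ℂ) • ((if a = c then D a else 0) • (Lt a * P)) := by
      intro a
      rw [Matrix.smul_mul]
      congr 1
      calc (Lt a * P * (Lt a)ᴴ) * (Lt c * P)
          = Lt a * ((P * (Lt a)ᴴ) * (Lt c * P)) := by simp only [Matrix.mul_assoc]
        _ = Lt a * ((if a = c then D a else 0) • P) := by rw [key2]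
        _ = (if a = c then D a else 0) • (Lt a * P) := by rw [Matrix.mul_smul]
    simp_rw [e3]
    rw [Finset.sum_eq_single c]
    · rw [if_pos rfl, smul_smul]
      by_cases hc : dg c = 0
      · rw [hLP0 c hc]
        simp
      · have hone : (((dg c)⁻¹ : ℝ) : ℂ) * D c = 1 := by
          rw [hD]
          norm_cast
          field_simp
          rw [← Complex.ofReal_mul, one_div_mul_cancel hc, Complex.ofReal_one]
        rw [hone, one_smul]
    · intro b _ hb
      rw [if_neg hb]
      simp
    · intro hc
      exact absurd (Finset.mem_univ c) hc
  have hQH : Qᴴ = Q := by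
    rw [hQ, Matrix.conjTranspose_sum]
    refine Finset.sum_congr rfl fun a _ => ?_
    rw [Matrix.conjTranspose_smul]
    congr 1
    · exact Complex.conj_ofReal _
    · simp only [Matrix.conjTranspose_mul, Matrix.conjTranspose_conjTranspose, hP1,
        Matrix.mul_assoc]
  have hQQ : Q * Q = Q := by
    have hstep : Q * Q = ∑ a, (((dg a)⁻¹ : ℝ) : ℂ) • (Q * (Lt a * P) * (Lt a)ᴴ) := by
      have h9 : Q * Q = Q * ∑ a, (((dg a)⁻¹ : ℝ) : ℂ) • (Lt a * P * (Lt a)ᴴ) := by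
        rw [← hQ]
      rw [h9, Finset.mul_sum]
      refine Finset.sum_congr rfl fun a _ => ?_
      rw [Matrix.mul_smul]
      congr 1
      simp only [Matrix.mul_assoc]
    rw [hstep]
    simp_rw [hQP]
    exact hQ.symm
  set Rk : ι → Mat m := fun a => (((sq a)⁻¹ : ℝ) : ℂ) • (P * (Lt a)ᴴ) with hRk
  have hRkH : ∀ a, (Rk a)ᴴ = (((sq a)⁻¹ : ℝ) : ℂ) • (Lt a * P) := by
    intro a
    rw [hRk]
    rw [Matrix.conjTranspose_smul]
    congr 1
    · exact Complex.conj_ofReal _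
    · rw [Matrix.conjTranspose_mul, hP1, Matrix.conjTranspose_conjTranspose]
  have hsum1 : ∑ a, (Rk a)ᴴ * Rk a = Q := by
    rw [hQ]
    refine Finset.sum_congr rfl fun a _ => ?_
    rw [hRkH, hRk, Matrix.smul_mul, Matrix.mul_smul, smul_smul, hinv]
    congr 1
    calc (Lt a * P) * (P * (Lt a)ᴴ) = Lt a * (P * P) * (Lt a)ᴴ := by
          simp only [Matrix.mul_assoc]
      _ = Lt a * P * (Lt a)ᴴ := by rw [hP2]
  set G : ι ⊕ Unit → Mat m := Sum.elim Rk (fun _ => 1 - Q) with hGdef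
  have hGsum : ∑ x, (G x)ᴴ * G x = 1 := by
    rw [Fintype.sum_sum_type]
    have hsub : ((1 : Mat m) - Q)ᴴ * (1 - Q) = 1 - Q := by
      have hct : ((1 : Mat m) - Q)ᴴ = 1 - Q := by
        rw [Matrix.conjTranspose_sub, Matrix.conjTranspose_one, hQH]
      rw [hct]
      have hexp : ((1 : Mat m) - Q) * (1 - Q) = 1 - Q - Q + Q * Q := by noncomm_ring
      rw [hexp, hQQ]
      abel
    simp only [hGdef, Sum.elim_inl, Sum.elim_inr]
    rw [hsum1]
    simp only [Finset.sum_const, Finset.card_univ, Fintype.card_unit, one_smul]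
    rw [hsub]
    abel
  refine ⟨krausChannel G, isChannel_of_family _ G (fun X => rfl) hGsum, ?_⟩
  intro ρ hρ hrange
  obtain ⟨hPρ, hρP⟩ := state_supported hP1 hP3 hρ.1 hrange
  have hΦρ : Φ' ρ = ∑ c, (Lt c * P) * ρ * (P * (Lt c)ᴴ) := by
    rw [hL, ← hLtL]
    refine Finset.sum_congr rfl fun c _ => ?_
    have h10 : (Lt c * P) * ρ * (P * (Lt c)ᴴ) = Lt c * (P * ρ * P) * (Lt c)ᴴ := by
      simp only [Matrix.mul_assoc]
    rw [h10, hPρ, hρP]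
  show krausChannel G (Φ' ρ) = ρ
  rw [krausChannel_apply, Fintype.sum_sum_type]
  have hzero : ∀ _ : Unit, (1 - Q) * Φ' ρ * ((1 : Mat m) - Q)ᴴ = 0 := by
    intro _
    rw [hΦρ, Finset.mul_sum, Finset.sum_mul]
    refine Finset.sum_eq_zero fun c _ => ?_
    have h8 : ((1 : Mat m) - Q) * (Lt c * P) = 0 := by
      rw [Matrix.sub_mul, hQP, Matrix.one_mul, sub_self]
    calc (1 - Q) * ((Lt c * P) * ρ * (P * (Lt c)ᴴ)) * ((1 : Mat m) - Q)ᴴ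
        = (((1 - Q) * (Lt c * P)) * (ρ * (P * (Lt c)ᴴ))) * ((1 : Mat m) - Q)ᴴ := by
          simp only [Matrix.mul_assoc]
      _ = 0 := by rw [h8, Matrix.zero_mul, Matrix.zero_mul]
  have hsumd : ∑ a, D a = 1 := by
    have e5 : ∑ a, P * ((Lt a)ᴴ * Lt a) * P = (∑ a, D a) • P := by
      rw [Finset.sum_smul]
      refine Finset.sum_congr rfl fun a _ => ?_
      rw [key1' a a, if_pos rfl]
    have e6 : ∑ a, P * ((Lt a)ᴴ * Lt a) * P = P := by
      calc ∑ a, P * ((Lt a)ᴴ * Lt a) * P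
          = P * (∑ a, (Lt a)ᴴ * Lt a) * P := by rw [Finset.mul_sum, Finset.sum_mul]
        _ = P := by rw [hLtsum, Matrix.mul_one, hP2]
    exact smul_cancel_of_ne_zero hP0 ((e5.symm.trans e6).trans (one_smul ℂ P).symm)
  have hfirst : ∀ a, Rk a * Φ' ρ * (Rk a)ᴴ = D a • ρ := by
    intro a
    rw [hΦρ, hRk, hRkH, Matrix.smul_mul, Matrix.smul_mul, Matrix.mul_smul, smul_smul,
      hinv]
    have e7 : (P * (Lt a)ᴴ) * (∑ c, (Lt c * P) * ρ * (P * (Lt c)ᴴ)) * (Lt a * P)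
        = ∑ c, ((P * (Lt a)ᴴ) * (Lt c * P)) * ρ * ((P * (Lt c)ᴴ) * (Lt a * P)) := by
      rw [Finset.mul_sum, Finset.sum_mul]
      refine Finset.sum_congr rfl fun c _ => ?_
      simp only [Matrix.mul_assoc]
    rw [e7]
    have hPρP : P * ρ * P = ρ := by rw [hPρ, hρP]
    have e8 : ∀ c, ((P * (Lt a)ᴴ) * (Lt c * P)) * ρ * ((P * (Lt c)ᴴ) * (Lt a * P))
        = (if a = c then D a * D a else 0) • ρ := by
      intro c
      rw [key2 a c, key2 c a, Matrix.smul_mul, Matrix.smul_mul, Matrix.mul_smul,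
        smul_smul, hPρP]
      congr 1
      by_cases hac : a = c
      · subst hac
        simp
      · simp only [if_neg hac, if_neg (show ¬c = a from fun h => hac h.symm),
          mul_zero]
    simp_rw [e8]
    rw [Finset.sum_eq_single a]
    · rw [if_pos rfl, smul_smul]
      congr 1
      rw [hD]
      by_cases hz : dg a = 0
      · simp [hz]
      · norm_cast
        field_simp
        rw [← Complex.ofReal_mul, one_div_mul_cancel hz, Complex.ofReal_one]
    · intro b _ hb
      rw [if_neg (fun h => hb h.symm)]
      simp
    · intro hc
      exact absurd (Finset.mem_univ a) hc
  simp only [hGdef, Sum.elim_inl, Sum.elim_inr]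
  have h11 : ∑ _ : Unit, ((1 : Mat m) - Q) * Φ' ρ * ((1 : Mat m) - Q)ᴴ = 0 := by
    rw [Fintype.sum_unique]
    exact hzero ()
  rw [h11, add_zero]
  simp_rw [hfirst]
  rw [← Finset.sum_smul, hsumd, one_smul]

end KLB
section Glue
variable {d p : ℕ} (K : Fin p → Mat d)

lemma correctable_bot {m : ℕ} (Φ' : Mat m →ₗ[ℂ] Mat m) : Correctable Φ' ⊥ := by
  refine ⟨LinearMap.id, ⟨1, fun _ => 1, fun X => by simp, by simp⟩, ?_⟩
  intro ρ hρ hr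
  have hρ0 : ρ = 0 := by
    apply matrix_eq_of_mulVec
    intro x
    have h1 : ρ.mulVecLin x ∈ (⊥ : Submodule ℂ (Fin m → ℂ)) := hr ⟨x, rfl⟩
    simpa using h1
  exact absurd hρ.2 (by rw [hρ0]; simp)

lemma exists_unit_smul {m : ℕ} {φ : Fin m → ℂ} (hφ : φ ≠ 0) :
    ∃ c : ℂ, c ≠ 0 ∧ IsUnitVec (c • φ) := by
  set s : ℝ := ∑ i, Complex.normSq (φ i) with hs
  have hs0 : 0 < s := by
    rcases lt_or_eq_of_le (Finset.sum_nonneg fun i _ => Complex.normSq_nonneg (φ i))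
      with h | h
    · exact h
    · exfalso
      apply hφ
      ext i
      have := (Finset.sum_eq_zero_iff_of_nonneg fun i _ =>
        Complex.normSq_nonneg (φ i)).mp h.symm i (Finset.mem_univ i)
      simpa using Complex.normSq_eq_zero.mp this
  refine ⟨(((Real.sqrt s)⁻¹ : ℝ) : ℂ), ?_, ?_⟩
  · simp only [ne_eq, Complex.ofReal_eq_zero, inv_eq_zero]
    exact fun h => (Real.sqrt_ne_zero'.mpr hs0) h
  · show ∑ i, star ((((Real.sqrt s)⁻¹ : ℝ) : ℂ) • φ) i * ((((Real.sqrt s)⁻¹ : ℝ) : ℂ) • φ) i = 1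
    have hterm : ∀ i, star ((((Real.sqrt s)⁻¹ : ℝ) : ℂ) • φ) i
        * ((((Real.sqrt s)⁻¹ : ℝ) : ℂ) • φ) i
        = (((Real.sqrt s)⁻¹ * (Real.sqrt s)⁻¹ : ℝ) : ℂ) * (Complex.normSq (φ i) : ℂ) := by
      intro i
      simp only [Pi.star_apply, Pi.smul_apply, smul_eq_mul, star_mul',
        Complex.star_def, Complex.conj_ofReal]
      rw [show ((Complex.normSq (φ i) : ℝ) : ℂ)
        = (starRingEnd ℂ) (φ i) * φ i from Complex.normSq_eq_conj_mul_self ▸ rfl]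
      push_cast
      ring
    simp_rw [hterm]
    rw [← Finset.mul_sum, ← Complex.ofReal_sum, ← hs, ← mul_inv,
      Real.mul_self_sqrt hs0.le]
    norm_cast
    field_simp

lemma pureState_isState {m : ℕ} {ψ : Fin m → ℂ} (hψ : IsUnitVec ψ) :
    IsState (pureState ψ) := by
  constructor
  · refine Matrix.posSemidef_iff_dotProduct_mulVec.mpr ⟨conjTranspose_pureState ψ, fun x => ?_⟩
    rw [pureState_mulVec, dotProduct_smul]
    have h1 : star x ⬝ᵥ ψ = star (star ψ ⬝ᵥ x) := by
      simp only [dotProduct, star_sum, star_mul', Pi.star_apply, star_star]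
      exact Finset.sum_congr rfl fun i _ => by ring
    rw [smul_eq_mul, h1, Complex.star_def, Complex.mul_conj, Complex.zero_le_real]
    exact Complex.normSq_nonneg _
  · show ∑ i, pureState ψ i i = 1
    rw [← hψ]
    exact Finset.sum_congr rfl fun i _ => by
      show ψ i * star (ψ i) = star (ψ i) * ψ i
      ring

lemma pureState_range_le {m : ℕ} {ψ : Fin m → ℂ} {C : Submodule ℂ (Fin m → ℂ)}
    (hψ : ψ ∈ C) : LinearMap.range (pureState ψ).mulVecLin ≤ C := by
  rintro _ ⟨x, rfl⟩
  show (pureState ψ).mulVecLin x ∈ C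
  rw [Matrix.mulVecLin_apply, pureState_mulVec]
  exact C.smul_mem _ hψ

lemma correctable_congr {Φ : Module.End ℂ (Mat d)}
    (hK : ∀ X, Φ X = ∑ i, K i * X * (K i)ᴴ) (hK1 : ∑ i, (K i)ᴴ * K i = 1)
    {N M : ℕ} (h : opSys K N = opSys K M) (C : Submodule ℂ (Fin d → ℂ))
    (hcor : Correctable (Φ ^ N) C) : Correctable (Φ ^ M) C := by
  classical
  by_cases hbot : C = ⊥
  · subst hbot
    exact correctable_bot _
  obtain ⟨P, hP1, hP2, hP3, hP4⟩ := exists_projMat C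
  have hP0 : P ≠ 0 := by
    obtain ⟨x, hxC, hx0⟩ := Submodule.ne_bot_iff C |>.mp hbot
    intro h0
    apply hx0
    rw [← hP3 x hxC, h0, Matrix.zero_mulVec]
  obtain ⟨R, hRchan, hRrec⟩ := hcor
  obtain ⟨q, Rkk, hRk, hRk1⟩ := hRchan
  have hpar : ∀ (c : Fin q) (i : Fin N → Fin p), ∀ φ ∈ C, ∃ kk : ℂ,
      (Rkk c * krausProd K i) *ᵥ φ = kk • φ := by
    intro c i φ hφ
    by_cases hz : φ = 0
    · exact ⟨0, by simp [hz]⟩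
    obtain ⟨c₀, hc₀, hunit⟩ := exists_unit_smul hz
    set ψ := c₀ • φ with hψdef
    have hψC : ψ ∈ C := C.smul_mem _ hφ
    have hrec := hRrec (pureState ψ) (pureState_isState hunit) (pureState_range_le hψC)
    have hcomp : R ((Φ ^ N) (pureState ψ)) = ∑ ci : Fin q × (Fin N → Fin p),
        pureState ((Rkk ci.1 * krausProd K ci.2) *ᵥ ψ) := by
      rw [pow_pure_eq K hK, map_sum, Fintype.sum_prod_type]
      rw [Finset.sum_comm]
      refine Finset.sum_congr rfl fun i _ => ?_
      rw [hRk]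
      refine Finset.sum_congr rfl fun c' _ => ?_
      rw [pureState_eq_outer, pureState_eq_outer, mul_outer_mul, Matrix.mulVec_mulVec]
    have hpure := pure_decomp (fun ci : Fin q × (Fin N → Fin p) =>
      (Rkk ci.1 * krausProd K ci.2) *ᵥ ψ) ψ hunit (by rw [← hcomp, hrec]) (c, i)
    refine ⟨star ψ ⬝ᵥ ((Rkk c * krausProd K i) *ᵥ ψ), ?_⟩
    have h12 : (Rkk c * krausProd K i) *ᵥ ψ
        = (star ψ ⬝ᵥ ((Rkk c * krausProd K i) *ᵥ ψ)) • ψ := hpure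
    have h14 : c₀ • ((Rkk c * krausProd K i) *ᵥ φ)
        = c₀ • ((star ψ ⬝ᵥ ((Rkk c * krausProd K i) *ᵥ ψ)) • φ) := by
      calc c₀ • ((Rkk c * krausProd K i) *ᵥ φ)
          = (Rkk c * krausProd K i) *ᵥ ψ := by rw [hψdef, Matrix.mulVec_smul]
        _ = (star ψ ⬝ᵥ ((Rkk c * krausProd K i) *ᵥ ψ)) • ψ := h12
        _ = c₀ • ((star ψ ⬝ᵥ ((Rkk c * krausProd K i) *ᵥ ψ)) • φ) := by
            rw [hψdef, smul_comm]
    exact smul_right_injective (Fin d → ℂ) hc₀ h14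
  have hKL0 := KL_forward C hP1 hP2 hP4 (fun i : Fin N → Fin p => krausProd K i)
    Rkk hRk1 hpar
  let W : Submodule ℂ (Mat d) :=
    { carrier := {S | ∃ lam : ℂ, P * S * P = lam • P}
      add_mem' := by
        rintro S T ⟨l1, h1⟩ ⟨l2, h2⟩
        exact ⟨l1 + l2, by rw [Matrix.mul_add, Matrix.add_mul, h1, h2, add_smul]⟩
      zero_mem' := ⟨0, by simp⟩
      smul_mem' := by
        rintro c S ⟨l, h1⟩
        exact ⟨c * l, by rw [Matrix.mul_smul, Matrix.smul_mul, h1, smul_smul]⟩ }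
  have hWN : opSys K N ≤ W := Submodule.span_le.mpr (by
    rintro S ⟨i, j, rfl⟩
    exact hKL0 i j)
  have hWM : ∀ a b : Fin M → Fin p, ∃ lam : ℂ,
      P * ((krausProd K a)ᴴ * krausProd K b) * P = lam • P := by
    intro a b
    have hmem : (krausProd K a)ᴴ * krausProd K b ∈ opSys K N := by
      rw [h]
      exact Submodule.subset_span ⟨a, b, rfl⟩
    exact hWN hmem
  exact KL_backward C hP1 hP2 hP3 hP0 (Φ ^ M) (fun i => krausProd K i)
    (pow_apply_kraus K hK M) (krausProd_sum_one K hK1 M) hWM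

lemma Dquantum_congr {Φ : Module.End ℂ (Mat d)}
    (hK : ∀ X, Φ X = ∑ i, K i * X * (K i)ᴴ) (hK1 : ∑ i, (K i)ᴴ * K i = 1)
    {N M : ℕ} (h : opSys K N = opSys K M) :
    Dquantum (Φ ^ N) = Dquantum (Φ ^ M) := by
  unfold Dquantum
  congr 1
  ext k
  simp only [Set.mem_setOf_eq]
  constructor <;> rintro ⟨C, hC, hCk⟩
  · exact ⟨C, correctable_congr K hK hK1 h C hC, hCk⟩
  · exact ⟨C, correctable_congr K hK hK1 h.symm C hC, hCk⟩

end Glue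
end CapStab

/-- The one-shot zero-error classical, quantum, and entanglement-assisted
classical capacities of the powers of a channel stabilize after at most `d ^ 2` iterations. -/
theorem capacities_stabilize (d : ℕ) (Φ : Module.End ℂ (Mat d)) (hΦ : IsChannel Φ) :
    ∃ N : ℕ, N ≤ d ^ 2 ∧ ∀ n : ℕ,
      Mclassical (Φ ^ N) = Mclassical (Φ ^ (N + n)) ∧
      Dquantum (Φ ^ N) = Dquantum (Φ ^ (N + n)) ∧
      MEclassical (Φ ^ N) = MEclassical (Φ ^ (N + n)) := by
  obtain ⟨p, K, hK, hK1⟩ := hΦ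
  obtain ⟨N, hN, hstab⟩ := CapStab.exists_opSys_stab K hK1
  refine ⟨N, hN, fun n => ?_⟩
  have hEq : opSys K N = opSys K (N + n) := (CapStab.opSys_stab K hstab n).symm
  exact ⟨CapStab.Mclassical_congr K hK hEq,
    CapStab.Dquantum_congr K hK hK1 hEq,
    CapStab.MEclassical_congr K hK hEq⟩
end

section
/- For d ≥ 2, let A_d ∈ M_d(ℝ) be the column stochastic matrix with entries (A_d)_{d,1} = 1, (A_d)_{1,2} = (A_d)_{d,2} = 1/2, (A_d)_{j-1,j} = 1 for 3 ≤ j ≤ d, and all other entries 0. Then the classical channel Φ_{A_d} on M_d(ℂ) satisfies c(Φ_{A_d}) = ⌈(d² − 2d + 2)/2⌉. In particular, there exists a quantum channel Φ on M_d(ℂ) whose classical scrambling time equals ⌈(d² − 2d + 2)/2⌉. -/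
open Matrix Filter
open scoped ComplexOrder

namespace Scram

variable {d : ℕ}

lemma amat_nonneg (i j : Fin d) : 0 ≤ Amat d i j := by
  unfold Amat; simp only [Matrix.of_apply]; split_ifs <;> norm_num

lemma apow_nonneg (n : ℕ) (i j : Fin d) : 0 ≤ ((Amat d) ^ n) i j := by
  induction n generalizing i j with
  | zero =>
    rw [pow_zero, Matrix.one_apply]; split_ifs <;> norm_num
  | succ n ih =>
    rw [pow_succ', Matrix.mul_apply]
    exact Finset.sum_nonneg fun k _ => mul_nonneg (amat_nonneg _ _) (ih _ _)

lemma pos_step {n : ℕ} {x z z' : Fin d} (h1 : 0 < ((Amat d)^n) z x) (h2 : 0 < Amat d z' z) :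
    0 < ((Amat d)^(n+1)) z' x := by
  rw [pow_succ', Matrix.mul_apply]
  exact Finset.sum_pos' (fun k _ => mul_nonneg (amat_nonneg _ _) (apow_nonneg _ _ _))
    ⟨z, Finset.mem_univ z, mul_pos h2 h1⟩

lemma pos_split {n : ℕ} {x z' : Fin d} (h : 0 < ((Amat d)^(n+1)) z' x) :
    ∃ z, 0 < Amat d z' z ∧ 0 < ((Amat d)^n) z x := by
  rw [pow_succ', Matrix.mul_apply] at h
  by_contra hc
  push_neg at hc
  have hz : ∀ z ∈ Finset.univ, Amat d z' z * ((Amat d)^n) z x = 0 := by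
    intro z _
    rcases (amat_nonneg z' z).lt_or_eq with h1 | h1
    · have h2 : ((Amat d)^n) z x = 0 :=
        le_antisymm (hc z h1) (apow_nonneg _ _ _)
      rw [h2, mul_zero]
    · rw [← h1, zero_mul]
  rw [Finset.sum_eq_zero hz] at h; exact lt_irrefl 0 h

lemma edge_cases {z' z : Fin d} (h : 0 < Amat d z' z) :
    ((z':ℕ) = d-1 ∧ (z:ℕ) = 0) ∨ ((z:ℕ) = 1 ∧ ((z':ℕ) = 0 ∨ (z':ℕ) = d-1)) ∨
      (2 ≤ (z:ℕ) ∧ (z':ℕ)+1 = (z:ℕ)) := by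
  unfold Amat at h; simp only [Matrix.of_apply] at h
  split_ifs at h with h1 h2 h3
  · exact Or.inl h1
  · exact Or.inr (Or.inl h2)
  · exact Or.inr (Or.inr h3)
  · norm_num at h

/-- steps-to-the-chord-vertex function -/
def oh (x : Fin d) : ℕ := if (x:ℕ) = 0 then d-1 else (x:ℕ)-1

/-- the invariant: support of `A^n` columns -/
lemma reach_of_pos (hd : 2 ≤ d) {x : Fin d} :
    ∀ {n : ℕ} {z : Fin d}, 0 < ((Amat d)^n) z x →
    ∃ c t : ℕ, (z:ℕ) + n + c = (x:ℕ) + t*d ∧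
      (c = 0 ∨ ∃ c₀, c = c₀+1 ∧ oh x + c₀*(d-1) + 1 + (d-1-(z:ℕ)) ≤ n) := by
  intro n
  induction n with
  | zero =>
    intro z h
    rw [pow_zero, Matrix.one_apply] at h
    split_ifs at h with hzx
    · exact ⟨0, 0, by simp [hzx], Or.inl rfl⟩
    · exact absurd h (lt_irrefl 0)
  | succ n ih =>
    intro z h
    obtain ⟨w, hzw, hw⟩ := pos_split h
    obtain ⟨c, t, heq, hcon⟩ := ih hw
    rcases edge_cases hzw with ⟨hz, hw0⟩ | ⟨hw1, hz⟩ | ⟨hw2, hz⟩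
    · -- w = 0, z = d-1 : wrap, same chord count
      refine ⟨c, t+1, ?_, ?_⟩
      · have h1 : (t+1)*d = t*d + d := by ring
        rw [h1]; omega
      · rcases hcon with h0 | ⟨c₀, hc₀, hle⟩
        · exact Or.inl h0
        · exact Or.inr ⟨c₀, hc₀, by omega⟩
    · rcases hz with hz0 | hzd
      · -- w = 1, z = 0 : cycle step
        refine ⟨c, t, by omega, ?_⟩
        rcases hcon with h0 | ⟨c₀, hc₀, hle⟩
        · exact Or.inl h0
        · exact Or.inr ⟨c₀, hc₀, by omega⟩
      · -- w = 1, z = d-1 : chord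
        refine ⟨c+1, t+1, ?_, ?_⟩
        · have h1 : (t+1)*d = t*d + d := by ring
          rw [h1]; omega
        · refine Or.inr ⟨c, rfl, ?_⟩
          rcases hcon with h0 | ⟨c₀, hc₀, hle⟩
          · -- c = 0; need oh x + 1 ≤ n + 1
            subst h0
            unfold oh
            split_ifs with hx0
            · -- x = 0 : 1 + n = t*d, so t ≥ 1
              rcases t with _ | s
              · simp at heq; omega
              · have h1 : (s+1)*d = s*d + d := by ring
                rw [h1] at heq; omega
            · omega
          · subst hc₀
            have h1 : (c₀+1)*(d-1) = c₀*(d-1) + (d-1) := by ring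
            rw [h1]; omega
    · -- 2 ≤ w, z = w - 1 : cycle step
      refine ⟨c, t, by omega, ?_⟩
      rcases hcon with h0 | ⟨c₀, hc₀, hle⟩
      · exact Or.inl h0
      · exact Or.inr ⟨c₀, hc₀, by omega⟩



/-- cyclic predecessor -/
def pred (hd : 2 ≤ d) (z : Fin d) : Fin d :=
  if (z:ℕ) = 0 then ⟨d-1, by omega⟩ else ⟨(z:ℕ)-1, by have := z.isLt; omega⟩

def vone (hd : 2 ≤ d) : Fin d := ⟨1, by omega⟩
def vlast (hd : 2 ≤ d) : Fin d := ⟨d-1, by omega⟩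

lemma amat_entry_pos (hd : 2 ≤ d) {i j : Fin d}
    (h : ((i:ℕ) = d-1 ∧ (j:ℕ) = 0) ∨ ((j:ℕ) = 1 ∧ ((i:ℕ) = 0 ∨ (i:ℕ) = d-1)) ∨
      (2 ≤ (j:ℕ) ∧ (i:ℕ)+1 = (j:ℕ))) : 0 < Amat d i j := by
  unfold Amat; simp only [Matrix.of_apply]
  rcases h with h | h | h
  · rw [if_pos h]; norm_num
  · rw [if_neg (by omega : ¬((i:ℕ) = d-1 ∧ (j:ℕ) = 0)), if_pos h]; norm_num
  · rw [if_neg (by omega : ¬((i:ℕ) = d-1 ∧ (j:ℕ) = 0)),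
      if_neg (by omega : ¬((j:ℕ) = 1 ∧ ((i:ℕ) = 0 ∨ (i:ℕ) = d-1))), if_pos h]
    norm_num

lemma pred_val' (hd : 2 ≤ d) (z : Fin d) :
    ((pred hd z : Fin d):ℕ) = if (z:ℕ) = 0 then d-1 else (z:ℕ)-1 := by
  unfold pred; split_ifs <;> rfl

lemma edge_pred (hd : 2 ≤ d) (z : Fin d) : 0 < Amat d (pred hd z) z := by
  have hz := z.isLt
  have hpv := pred_val' hd z
  apply amat_entry_pos hd
  by_cases h0 : (z:ℕ) = 0
  · exact Or.inl ⟨by rw [hpv, if_pos h0], h0⟩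
  · by_cases h1 : (z:ℕ) = 1
    · exact Or.inr (Or.inl ⟨h1, Or.inl (by rw [hpv, if_neg h0]; omega)⟩)
    · exact Or.inr (Or.inr ⟨by omega, by rw [hpv, if_neg h0]; omega⟩)

lemma edge_chord (hd : 2 ≤ d) : 0 < Amat d (vlast hd) (vone hd) :=
  amat_entry_pos hd (Or.inr (Or.inl ⟨rfl, Or.inr rfl⟩))

inductive Walk (d : ℕ) : ℕ → Fin d → Fin d → Prop
  | nil (x : Fin d) : Walk d 0 x x
  | cons {n : ℕ} {x z z' : Fin d} (h : 0 < Amat d z' z) (w : Walk d n x z) : Walk d (n+1) x z'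

lemma Walk.trans {m n : ℕ} {x y z : Fin d} (w1 : Walk d m x y) (w2 : Walk d n y z) :
    Walk d (m+n) x z := by
  induction w2 with
  | nil _ => exact w1
  | cons h _ ih => exact Walk.cons h (ih w1)

lemma walk_pos {n : ℕ} {x z : Fin d} (w : Walk d n x z) : 0 < ((Amat d)^n) z x := by
  induction w with
  | nil x => rw [pow_zero, Matrix.one_apply_eq]; norm_num
  | cons h _ ih =>
    rw [pow_succ', Matrix.mul_apply]
    exact Finset.sum_pos' (fun k _ => mul_nonneg (amat_nonneg _ _) (apow_nonneg _ _ _))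
      ⟨_, Finset.mem_univ _, mul_pos h ih⟩

lemma walk_pure (hd : 2 ≤ d) (x : Fin d) (n : ℕ) : Walk d n x ((pred hd)^[n] x) := by
  induction n with
  | zero => exact Walk.nil x
  | succ n ih =>
    rw [Function.iterate_succ_apply']
    exact Walk.cons (edge_pred hd _) ih

lemma pred_val (hd : 2 ≤ d) (z : Fin d) : ((pred hd z : Fin d) : ℕ) = ((z:ℕ) + (d-1)) % d := by
  have hz := z.isLt
  unfold pred
  split_ifs with h0
  · simp only [h0]
    rw [Nat.mod_eq_of_lt (by omega)]
    omega
  · have h1 : d ≤ (z:ℕ) + (d-1) := by omega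
    rw [Nat.mod_eq_sub_mod h1]
    have h2 : (z:ℕ) + (d-1) - d = (z:ℕ) - 1 := by omega
    rw [h2, Nat.mod_eq_of_lt (by omega)]

lemma pred_iter_val (hd : 2 ≤ d) (z : Fin d) (r : ℕ) :
    (((pred hd)^[r] z : Fin d) : ℕ) = ((z:ℕ) + r*(d-1)) % d := by
  induction r with
  | zero => simp [Nat.mod_eq_of_lt z.isLt]
  | succ r ih =>
    rw [Function.iterate_succ_apply', pred_val hd, ih, Nat.mod_add_mod]
    have : (z:ℕ) + r*(d-1) + (d-1) = (z:ℕ) + (r+1)*(d-1) := by ring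
    rw [this]

lemma sq_pred (hd : 2 ≤ d) : (d-1)*(d-1) = (d-2)*d + 1 := by
  obtain ⟨e, rfl⟩ : ∃ e, d = e + 2 := ⟨d - 2, by omega⟩
  have h1 : e + 2 - 1 = e + 1 := by omega
  have h2 : e + 2 - 2 = e := by omega
  rw [h1, h2]; ring

lemma pred_iter_oh (hd : 2 ≤ d) (x : Fin d) : (pred hd)^[oh x] x = vone hd := by
  have hx := x.isLt
  apply Fin.ext
  rw [pred_iter_val hd]
  show ((x:ℕ) + oh x * (d-1)) % d = 1
  unfold oh
  split_ifs with h0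
  · rw [h0]
    have h1 : 0 + (d-1)*(d-1) = 1 + (d-2)*d := by rw [sq_pred hd]; ring
    rw [h1, Nat.add_mul_mod_self_right]
    exact Nat.mod_eq_of_lt (by omega)
  · obtain ⟨m, hm⟩ : ∃ m, (x:ℕ) = m + 1 := ⟨(x:ℕ) - 1, by omega⟩
    obtain ⟨e, he⟩ : ∃ e, d = e + 2 := ⟨d - 2, by omega⟩
    have h2 : (x:ℕ) + ((x:ℕ) - 1) * (d-1) = 1 + m*d := by
      subst he; rw [hm]
      have h3 : m + 1 - 1 = m := by omega
      have h4 : e + 2 - 1 = e + 1 := by omega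
      rw [h3, h4]; ring
    rw [h2, Nat.add_mul_mod_self_right]
    exact Nat.mod_eq_of_lt (by omega)

lemma pred_iter_last (hd : 2 ≤ d) : (pred hd)^[d-2] (vlast hd) = vone hd := by
  apply Fin.ext
  rw [pred_iter_val hd]
  show ((d-1) + (d-2) * (d-1)) % d = 1
  obtain ⟨e, he⟩ : ∃ e, d = e + 2 := ⟨d - 2, by omega⟩
  have h2 : (d-1) + (d-2)*(d-1) = 1 + (d-2)*d := by
    subst he
    have h3 : e + 2 - 1 = e + 1 := by omega
    have h4 : e + 2 - 2 = e := by omega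
    rw [h3, h4]; ring
  rw [h2, Nat.add_mul_mod_self_right]
  exact Nat.mod_eq_of_lt (by omega)

lemma walk_short_loop (hd : 2 ≤ d) : Walk d (d-1) (vone hd) (vone hd) := by
  have w1 : Walk d 1 (vone hd) (vlast hd) := Walk.cons (edge_chord hd) (Walk.nil _)
  have w2 : Walk d (d-2) (vlast hd) (vone hd) := by
    have := walk_pure hd (vlast hd) (d-2)
    rwa [pred_iter_last hd] at this
  have := w1.trans w2
  have he : 1 + (d-2) = d-1 := by omega
  rwa [he] at this

lemma walk_loops (hd : 2 ≤ d) (c₀ : ℕ) : Walk d (c₀*(d-1)) (vone hd) (vone hd) := by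
  induction c₀ with
  | zero => simpa using Walk.nil (vone hd)
  | succ c ih =>
    have := ih.trans (walk_short_loop hd)
    have he : c*(d-1) + (d-1) = (c+1)*(d-1) := by ring
    rwa [he] at this

/-- master walk: descend to vertex 1, do `c₀` short loops, take the chord, coast `r` steps -/
lemma walk_chorded (hd : 2 ≤ d) (x : Fin d) (c₀ r : ℕ) :
    Walk d (oh x + c₀*(d-1) + 1 + r) x ((pred hd)^[r] (vlast hd)) := by
  have w1 : Walk d (oh x) x (vone hd) := by
    have := walk_pure hd x (oh x); rwa [pred_iter_oh hd] at this
  have w2 := walk_loops hd c₀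
  have w3 : Walk d 1 (vone hd) (vlast hd) := Walk.cons (edge_chord hd) (Walk.nil _)
  have w4 := walk_pure hd (vlast hd) r
  exact ((w1.trans w2).trans w3).trans w4


lemma mul_d_split (hd : 2 ≤ d) (u : ℕ) : u*d = u*(d-1) + u := by
  obtain ⟨v, rfl⟩ : ∃ v, d = v + 1 := ⟨d-1, by omega⟩
  simp [Nat.add_sub_cancel]
  ring

lemma key_div (e u : ℕ) (h : 2*u ≤ e*e + 2*e + 1) : u + 1 ≤ (e*e + 2*e + 3)/2 := by omega

/-- the main arithmetic dichotomy -/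
lemma lemA (hd : 2 ≤ d) {a b c₀ : ℕ} (ha : a ≤ d-1) (hb : b ≤ d-1) (hc : c₀ + 1 ≤ d-1)
    (hrel : a = b + (c₀+1) ∨ a + d = b + (c₀+1)) :
    a + c₀*(d-1) + 1 ≤ (d^2 - 2*d + 3)/2 ∨
      b + (d - (c₀+1) - 1)*(d-1) + 1 ≤ (d^2 - 2*d + 3)/2 := by
  obtain ⟨e, rfl⟩ : ∃ e, d = e + 2 := ⟨d - 2, by omega⟩
  have hd1 : e + 2 - 1 = e + 1 := by omega
  have hN : ((e+2)^2 - 2*(e+2) + 3)/2 = (e*e + 2*e + 3)/2 := by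
    have h1 : (e+2)^2 = e*e + (4*e + 4) := by ring
    rw [h1]; omega
  rw [hd1, hN]
  obtain ⟨f, hcf⟩ : ∃ f, c₀ + f = e := ⟨e - c₀, by omega⟩
  have hf : e + 2 - (c₀+1) - 1 = f := by omega
  rw [hf]
  have ha' : a ≤ e + 1 := by omega
  have hb' : b ≤ e + 1 := by omega
  rcases hrel with h | h
  · by_cases hpar : 2*(c₀+1) ≤ e + 1
    · left; apply key_div
      have hfact : (2*c₀+1)*(e+1) ≤ e*(e+1) := Nat.mul_le_mul_right _ (by omega)
      have h1 : (2*c₀+1)*(e+1) = 2*(c₀*(e+1)) + (e+1) := by ring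
      have h2 : e*(e+1) = e*e + e := by ring
      omega
    · right; apply key_div
      have hbf : b ≤ f := by omega
      have hfact : (2*f)*(e+1) ≤ e*(e+1) := Nat.mul_le_mul_right _ (by omega)
      have h1 : (2*f)*(e+1) = 2*(f*(e+1)) := by ring
      have h2 : e*(e+1) = e*e + e := by ring
      omega
  · by_cases hpar : 2*c₀ ≤ e
    · left; apply key_div
      have ha2 : a ≤ c₀ := by omega
      have hfact : (2*c₀)*(e+2) ≤ e*(e+2) := Nat.mul_le_mul_right _ hpar
      have h1 : (2*c₀)*(e+2) = 2*(c₀*(e+1)) + 2*c₀ := by ring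
      have h2 : e*(e+2) = e*e + 2*e := by ring
      omega
    · right; apply key_div
      have hfact : (2*f+2)*(e+1) ≤ (e+1)*(e+1) := Nat.mul_le_mul_right _ (by omega)
      have h1 : (2*f+2)*(e+1) = 2*(f*(e+1)) + 2*(e+1) := by ring
      have h2 : (e+1)*(e+1) = e*e + 2*e + 1 := by ring
      omega

lemma fin_eq_of_zmod (hd : 2 ≤ d) {z z' : Fin d}
    (h : (((z:ℕ) : ZMod d)) = ((z':ℕ) : ZMod d)) : z = z' := by
  have h2 : (z:ℕ) % d = (z':ℕ) % d := (ZMod.natCast_eq_natCast_iff _ _ _).mp h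
  exact Fin.ext (by rwa [Nat.mod_eq_of_lt z.isLt, Nat.mod_eq_of_lt z'.isLt] at h2)

lemma zcast_dsub1 (hd : 2 ≤ d) : (((d-1 : ℕ)) : ZMod d) = -1 := by
  have h1 : ((d-1:ℕ) : ZMod d) = (d : ZMod d) - 1 := by
    push_cast [Nat.cast_sub (by omega : (1:ℕ) ≤ d)]
    ring
  rw [h1, ZMod.natCast_self]; ring

lemma oh_cast (hd : 2 ≤ d) (x : Fin d) :
    ((oh x : ℕ) : ZMod d) = ((x:ℕ) : ZMod d) - 1 := by
  unfold oh
  split_ifs with h0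
  · rw [h0, zcast_dsub1 hd]; simp
  · rw [Nat.cast_sub (by omega : (1:ℕ) ≤ (x:ℕ))]; simp

lemma oh_inj (hd : 2 ≤ d) {x x' : Fin d} (h : oh x = oh x') : x = x' := by
  have h1 := x.isLt; have h2 := x'.isLt
  unfold oh at h
  apply Fin.ext
  split_ifs at h with ha hb hb <;> omega

lemma oh_le (x : Fin d) (hd : 2 ≤ d) : oh x ≤ d - 1 := by
  have := x.isLt; unfold oh; split_ifs <;> omega

/-- scrambling holds at time N -/
lemma meet_at_N (hd : 2 ≤ d) (x x' : Fin d) :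
    ∃ z : Fin d, 0 < ((Amat d)^((d^2-2*d+3)/2)) z x ∧
      0 < ((Amat d)^((d^2-2*d+3)/2)) z x' := by
  set N := (d^2-2*d+3)/2 with hNdef
  by_cases hxx : x = x'
  · subst hxx
    exact ⟨(pred hd)^[N] x, walk_pos (walk_pure hd x N), walk_pos (walk_pure hd x N)⟩
  set a := oh x with hadef
  set b := oh x' with hbdef
  have haR : a ≤ d - 1 := oh_le x hd
  have hbR : b ≤ d - 1 := oh_le x' hd
  have hab : a ≠ b := fun h => hxx (oh_inj hd h)
  obtain ⟨c₀, hδ, hrel⟩ : ∃ c₀, c₀ + 1 ≤ d - 1 ∧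
      (a = b + (c₀+1) ∨ a + d = b + (c₀+1)) := by
    rcases lt_or_gt_of_ne hab with h | h
    · exact ⟨a + d - b - 1, by omega, Or.inr (by omega)⟩
    · exact ⟨a - b - 1, by omega, Or.inl (by omega)⟩
  -- cast facts
  have haC : ((a : ℕ) : ZMod d) = ((x:ℕ) : ZMod d) - 1 := oh_cast hd x
  have hbC : ((b : ℕ) : ZMod d) = ((x':ℕ) : ZMod d) - 1 := oh_cast hd x'
  have hrelC : ((a : ℕ) : ZMod d) = ((b:ℕ) : ZMod d) + (c₀ + 1) := by
    rcases hrel with h | h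
    · exact_mod_cast congrArg (Nat.cast : ℕ → ZMod d) h
    · have := congrArg (Nat.cast : ℕ → ZMod d) h
      push_cast at this
      rw [ZMod.natCast_self] at this
      push_cast
      linear_combination this
  have hX : ((x:ℕ) : ZMod d) = ((x':ℕ) : ZMod d) + ((c₀:ZMod d) + 1) := by
    linear_combination hbC + hrelC - haC
  rcases lemA hd haR hbR hδ hrel with hNa | hNb
  · -- use c₀+1 chords from x, coast from x'
    obtain ⟨r, hNr⟩ : ∃ r, N = a + c₀*(d-1) + 1 + r := ⟨N - (a + c₀*(d-1) + 1), by omega⟩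
    have walk1 : Walk d N x ((pred hd)^[r] (vlast hd)) := by
      rw [hNr]; exact walk_chorded hd x c₀ r
    have walk2 : Walk d N x' ((pred hd)^[N] x') := walk_pure hd x' N
    have hNc : (N : ZMod d) = (a:ℕ) + (c₀ : ZMod d)*(-1) + 1 + r := by
      have := congrArg (Nat.cast : ℕ → ZMod d) hNr
      push_cast at this
      rwa [zcast_dsub1 hd] at this
    have hzz : (pred hd)^[r] (vlast hd) = (pred hd)^[N] x' := by
      apply fin_eq_of_zmod hd
      rw [pred_iter_val hd, pred_iter_val hd]
      rw [ZMod.natCast_mod, ZMod.natCast_mod]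
      have hvl : ((vlast hd : Fin d) : ℕ) = d - 1 := rfl
      rw [hvl]
      push_cast
      rw [zcast_dsub1 hd, hNc, haC, hX]
      ring
    exact ⟨(pred hd)^[N] x', by rw [← hzz]; exact walk_pos walk1, walk_pos walk2⟩
  · -- coast from x, chords from x'
    set D := d - (c₀+1) - 1 with hDdef
    obtain ⟨r, hNr⟩ : ∃ r, N = b + D*(d-1) + 1 + r := ⟨N - (b + D*(d-1) + 1), by omega⟩
    have walk2 : Walk d N x' ((pred hd)^[r] (vlast hd)) := by
      rw [hNr]; exact walk_chorded hd x' D r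
    have walk1 : Walk d N x ((pred hd)^[N] x) := walk_pure hd x N
    have hNc : (N : ZMod d) = (b:ℕ) + (D : ZMod d)*(-1) + 1 + r := by
      have := congrArg (Nat.cast : ℕ → ZMod d) hNr
      push_cast at this
      rwa [zcast_dsub1 hd] at this
    have hDn : D + (c₀+1) + 1 = d := by omega
    have hDC : (D : ZMod d) = -(c₀ : ZMod d) - 2 := by
      have := congrArg (Nat.cast : ℕ → ZMod d) hDn
      push_cast at this
      rw [ZMod.natCast_self] at this
      linear_combination this
    have hzz : (pred hd)^[N] x = (pred hd)^[r] (vlast hd) := by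
      apply fin_eq_of_zmod hd
      rw [pred_iter_val hd, pred_iter_val hd]
      rw [ZMod.natCast_mod, ZMod.natCast_mod]
      have hvl : ((vlast hd : Fin d) : ℕ) = d - 1 := rfl
      rw [hvl]
      push_cast
      rw [zcast_dsub1 hd, hNc, hDC, hX, hbC]
      ring
    exact ⟨(pred hd)^[r] (vlast hd), by rw [← hzz]; exact walk_pos walk1, walk_pos walk2⟩

lemma delta_facts (hd : 2 ≤ d) :
    (d^2-2*d+3)/2 - 1 ≤ (d/2)*(d-1) ∧ (d^2-2*d+3)/2 - 1 ≤ (d - d/2 - 1)*d := by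
  rcases Nat.even_or_odd d with ⟨m, hm⟩ | ⟨m, hm⟩
  · have hm1 : 1 ≤ m := by omega
    have h2 : d/2 = m := by omega
    have hdd : d^2 = 4*(m*m) := by subst hm; ring
    have hr1 : m*(d-1) + m = 2*(m*m) := by
      have h4 : (d-1) + 1 = d := by omega
      have h5 : m*(d-1) + m = m*((d-1)+1) := by ring
      rw [h5, h4]; subst hm; ring
    have hr2 : (d - m - 1)*d + d = 2*(m*m) := by
      have h4 : d - m - 1 = m - 1 := by omega
      have h5 : (m-1) + 1 = m := by omega
      have h6 : (m-1)*d + d = ((m-1)+1)*d := by ring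
      rw [h4, h6, h5]; subst hm; ring
    rw [h2]
    omega
  · have hm1 : 1 ≤ m := by omega
    have h2 : d/2 = m := by omega
    have hdd : d^2 = 4*(m*m) + 4*m + 1 := by subst hm; ring
    have hr1 : m*(d-1) = 2*(m*m) := by
      have h4 : d - 1 = 2*m := by omega
      rw [h4]; ring
    have hr2 : (d - m - 1)*d = 2*(m*m) + m := by
      have h4 : d - m - 1 = m := by omega
      rw [h4, hm]; ring
    rw [h2]
    omega

/-- at any time `k ≤ N - 1`, columns `0` and `d - d/2` of `A^k` have disjoint support -/
lemma no_meet (hd : 2 ≤ d) (k : ℕ) (hk : k ≤ (d^2-2*d+3)/2 - 1) (z : Fin d) :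
    ¬(0 < ((Amat d)^k) z ⟨0, by omega⟩ ∧ 0 < ((Amat d)^k) z ⟨d - d/2, by omega⟩) := by
  obtain ⟨F1, F2⟩ := delta_facts hd
  set δ := d/2 with hδdef
  have hδ1 : 1 ≤ δ := by omega
  have hδ2 : δ ≤ d - 1 := by omega
  rintro ⟨h1, h2⟩
  obtain ⟨c, t, heq1, hcon1⟩ := reach_of_pos hd h1
  obtain ⟨c', t', heq2, hcon2⟩ := reach_of_pos hd h2
  have hx1 : ((⟨0, by omega⟩ : Fin d) : ℕ) = 0 := rfl
  have hx2 : ((⟨d - d/2, by omega⟩ : Fin d) : ℕ) = d - δ := rfl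
  rw [hx1] at heq1
  rw [hx2] at heq2
  have hoh1 : oh (⟨0, by omega⟩ : Fin d) = d - 1 := by unfold oh; simp
  have hoh2 : oh (⟨d - d/2, by omega⟩ : Fin d) = d - δ - 1 := by
    unfold oh
    rw [if_neg (by show ¬(d - d/2 = 0); omega)]
  rw [hoh1] at hcon1
  rw [hoh2] at hcon2
  -- bound c < δ
  have hc : c < δ := by
    rcases hcon1 with h0 | ⟨c₀, hc₀, hle⟩
    · omega
    · have hmul : (c₀+1)*(d-1) = c₀*(d-1) + (d-1) := by ring
      have hlt : (c₀+1)*(d-1) < δ*(d-1) := by omega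
      have := lt_of_mul_lt_mul_right hlt (Nat.zero_le (d-1))
      omega
  -- bound c' ≤ d - δ - 1
  have hc' : c' ≤ d - δ - 1 := by
    rcases hcon2 with h0 | ⟨c₀', hc₀', hle⟩
    · omega
    · have hsplit : (d-δ-1)*d = (d-δ-1)*(d-1) + (d-δ-1) := mul_d_split hd _
      have hlt : c₀'*(d-1) < (d-δ-1)*(d-1) := by omega
      have := lt_of_mul_lt_mul_right hlt (Nat.zero_le (d-1))
      omega
  -- contradiction from the two congruences
  rcases le_or_gt t t' with hle | hlt
  · have hmm := Nat.mul_le_mul_right d hle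
    omega
  · have hmm : (t'+1)*d ≤ t*d := Nat.mul_le_mul_right d hlt
    have h3 : (t'+1)*d = t'*d + d := by ring
    omega


-- ===================== channel layer =====================

lemma cc_apply (M : Matrix (Fin d) (Fin d) ℝ) (X : Mat d) (i j : Fin d) :
    classicalChannel M X i j = if i = j then ∑ k, (M i k : ℂ) * X k k else 0 := by
  show Matrix.of (fun i j => if i = j then ∑ k, (M i k : ℂ) * X k k
      else (0 : Mat d) i j * X i j) i j = _
  simp only [Matrix.of_apply, Matrix.zero_apply, zero_mul]

lemma cc_comp (M M' : Matrix (Fin d) (Fin d) ℝ) (X : Mat d) :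
    classicalChannel M (classicalChannel M' X) = classicalChannel (M * M') X := by
  ext i j
  rw [cc_apply, cc_apply]
  by_cases h : i = j
  · rw [if_pos h, if_pos h]
    have h1 : ∀ k : Fin d, (M i k : ℂ) * (classicalChannel M' X k k)
        = ∑ l, (M i k : ℂ) * ((M' k l : ℂ) * X l l) := by
      intro k
      rw [cc_apply, if_pos rfl, Finset.mul_sum]
    rw [Finset.sum_congr rfl fun k _ => h1 k, Finset.sum_comm]
    refine Finset.sum_congr rfl fun l _ => ?_
    rw [Matrix.mul_apply]
    push_cast
    rw [Finset.sum_mul]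
    exact Finset.sum_congr rfl fun k _ => by ring
  · rw [if_neg h, if_neg h]

lemma cc_pow (M : Matrix (Fin d) (Fin d) ℝ) (k : ℕ) :
    (classicalChannel M : Module.End ℂ (Mat d))^(k+1) = classicalChannel (M^(k+1)) := by
  induction k with
  | zero => simp
  | succ k ih =>
    have h1 : (classicalChannel M : Module.End ℂ (Mat d))^(k+1+1)
        = (classicalChannel M : Module.End ℂ (Mat d)) * (classicalChannel M : Module.End ℂ (Mat d))^(k+1) :=
      pow_succ' _ _
    rw [h1, ih]
    apply LinearMap.ext; intro X
    rw [Module.End.mul_apply, cc_comp, ← pow_succ']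

lemma unit_ne_zero {ψ : Fin d → ℂ} (h : IsUnitVec ψ) : ∃ k, ψ k ≠ 0 := by
  by_contra hc
  push_neg at hc
  unfold IsUnitVec at h
  simp only [hc, mul_zero, Finset.sum_const_zero] at h
  exact zero_ne_one h

lemma pure_diag (ψ : Fin d → ℂ) (k : Fin d) :
    pureState ψ k k = ((Complex.normSq (ψ k) : ℝ) : ℂ) := by
  show ψ k * star (ψ k) = _
  rw [Complex.star_def, Complex.mul_conj]

lemma cc_trace (M : Matrix (Fin d) (Fin d) ℝ) (ψ φ : Fin d → ℂ) :
    (classicalChannel M (pureState ψ) * classicalChannel M (pureState φ)).trace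
      = ((∑ i, (∑ k, M i k * Complex.normSq (ψ k)) * (∑ k, M i k * Complex.normSq (φ k)) : ℝ) : ℂ) := by
  have key : ∀ (χ : Fin d → ℂ) (i : Fin d), classicalChannel M (pureState χ) i i
      = ((∑ k, M i k * Complex.normSq (χ k) : ℝ) : ℂ) := by
    intro χ i
    rw [cc_apply, if_pos rfl]
    push_cast
    refine Finset.sum_congr rfl fun k _ => ?_
    rw [pure_diag]
  unfold Matrix.trace
  rw [Complex.ofReal_sum]
  refine Finset.sum_congr rfl fun i _ => ?_
  simp only [Matrix.diag_apply]
  rw [Complex.ofReal_mul, Matrix.mul_apply, Finset.sum_eq_single i]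
  · rw [key, key]
  · intro j _ hji
    rw [cc_apply, if_neg (fun h => hji h.symm)]
    exact zero_mul _
  · intro hmem; exact absurd (Finset.mem_univ i) hmem

lemma cscr_of_matscr {M : Matrix (Fin d) (Fin d) ℝ} (hM : ∀ i j, 0 ≤ M i j)
    (hs : MatScrambling M) : CScrambling (classicalChannel M) := by
  intro ψ φ hψ hφ _
  rw [cc_trace]
  apply Complex.zero_lt_real.mpr
  obtain ⟨kψ, hkψ⟩ := unit_ne_zero hψ
  obtain ⟨kφ, hkφ⟩ := unit_ne_zero hφ
  obtain ⟨i0, hi0⟩ := hs kψ kφ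
  have hpos : ∀ a b : ℝ, 0 ≤ a → 0 ≤ b → 0 < a * b → 0 < a ∧ 0 < b := by
    intro a b ha hb hab
    rcases mul_pos_iff.mp hab with ⟨h1, h2⟩ | ⟨h1, h2⟩
    · exact ⟨h1, h2⟩
    · exact absurd h2 (not_lt.mpr hb)
  obtain ⟨hM1, hM2⟩ := hpos _ _ (hM i0 kψ) (hM i0 kφ) hi0
  have hterm : ∀ (χ : Fin d → ℂ) (k0 : Fin d), χ k0 ≠ 0 → 0 < M i0 k0 →
      0 < ∑ k, M i0 k * Complex.normSq (χ k) := by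
    intro χ k0 hχ hM0
    refine Finset.sum_pos' (fun k _ => mul_nonneg (hM _ _) (Complex.normSq_nonneg _))
      ⟨k0, Finset.mem_univ _, mul_pos hM0 (Complex.normSq_pos.mpr hχ)⟩
  refine Finset.sum_pos' (fun i _ => mul_nonneg ?_ ?_)
    ⟨i0, Finset.mem_univ _, mul_pos (hterm ψ kψ hkψ hM1) (hterm φ kφ hkφ hM2)⟩
  · exact Finset.sum_nonneg fun k _ => mul_nonneg (hM _ _) (Complex.normSq_nonneg _)
  · exact Finset.sum_nonneg fun k _ => mul_nonneg (hM _ _) (Complex.normSq_nonneg _)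

lemma not_cscr {M : Matrix (Fin d) (Fin d) ℝ} (hM : ∀ i j, 0 ≤ M i j) {x1 x2 : Fin d}
    (hx : x1 ≠ x2) (hdis : ∀ i, ¬(0 < M i x1 ∧ 0 < M i x2)) :
    ¬ CScrambling (classicalChannel M) := by
  intro hcs
  set ψ : Fin d → ℂ := fun i => if i = x1 then (1:ℂ) else 0 with hψdef
  set φ : Fin d → ℂ := fun i => if i = x2 then (1:ℂ) else 0 with hφdef
  have hψu : IsUnitVec ψ := by
    unfold IsUnitVec
    have h1 : ∀ i, star (ψ i) * ψ i = if i = x1 then (1:ℂ) else 0 := by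
      intro i; by_cases h : i = x1 <;> simp [hψdef, h]
    rw [Finset.sum_congr rfl fun i _ => h1 i, Finset.sum_ite_eq' Finset.univ x1 (fun _ => (1:ℂ))]
    simp
  have hφu : IsUnitVec φ := by
    unfold IsUnitVec
    have h1 : ∀ i, star (φ i) * φ i = if i = x2 then (1:ℂ) else 0 := by
      intro i; by_cases h : i = x2 <;> simp [hφdef, h]
    rw [Finset.sum_congr rfl fun i _ => h1 i, Finset.sum_ite_eq' Finset.univ x2 (fun _ => (1:ℂ))]
    simp
  have horth : ∑ i, star (ψ i) * φ i = 0 := by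
    refine Finset.sum_eq_zero fun i _ => ?_
    by_cases h1 : i = x1
    · subst h1
      simp only [hψdef, hφdef, if_pos rfl]
      rw [if_neg hx, mul_zero]
    · simp [hψdef, h1]
  have hlt := hcs ψ φ hψu hφu horth
  rw [cc_trace] at hlt
  have hns : ∀ (x0 : Fin d) (k : Fin d),
      Complex.normSq (if k = x0 then (1:ℂ) else 0) = if k = x0 then (1:ℝ) else 0 := by
    intro x0 k; by_cases h : k = x0 <;> simp [h]
  have hsum : ∀ (x0 : Fin d) i, ∑ k, M i k * Complex.normSq (if k = x0 then (1:ℂ) else 0) = M i x0 := by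
    intro x0 i
    have h1 : ∀ k, M i k * Complex.normSq (if k = x0 then (1:ℂ) else 0)
        = if k = x0 then M i x0 else 0 := by
      intro k; rw [hns]; by_cases h : k = x0 <;> simp [h]
    rw [Finset.sum_congr rfl fun k _ => h1 k, Finset.sum_ite_eq' Finset.univ x0 (fun _ => M i x0)]
    simp
  have hzero : (∑ i, (∑ k, M i k * Complex.normSq (ψ k)) * (∑ k, M i k * Complex.normSq (φ k)) : ℝ) = 0 := by
    refine Finset.sum_eq_zero fun i _ => ?_
    rw [hψdef, hφdef, hsum x1 i, hsum x2 i]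
    have := hdis i
    rcases (hM i x1).lt_or_eq with h1 | h1
    · rcases (hM i x2).lt_or_eq with h2 | h2
      · exact absurd ⟨h1, h2⟩ this
      · rw [← h2, mul_zero]
    · rw [← h1, zero_mul]
  rw [hzero] at hlt
  simp at hlt

-- ===================== column sums and Kraus =====================

lemma amat_colsum (hd : 2 ≤ d) (j : Fin d) : ∑ i, Amat d i j = 1 := by
  have hjlt := j.isLt
  by_cases hj0 : (j:ℕ) = 0
  · have hfun : ∀ i : Fin d, Amat d i j = if i = (⟨d-1, by omega⟩ : Fin d) then 1 else 0 := by
      intro i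
      unfold Amat; simp only [Matrix.of_apply]
      by_cases hi : (i:ℕ) = d-1
      · rw [if_pos ⟨hi, hj0⟩, if_pos (Fin.ext hi)]
      · rw [if_neg (fun h => hi h.1), if_neg (by omega), if_neg (by omega),
          if_neg (fun h => hi (by rw [h]))]
    rw [Finset.sum_congr rfl fun i _ => hfun i,
      Finset.sum_ite_eq' Finset.univ _ (fun _ => (1:ℝ))]
    simp
  · by_cases hj1 : (j:ℕ) = 1
    · have hfun : ∀ i : Fin d, Amat d i j =
          (if i = (⟨0, by omega⟩ : Fin d) then 1/2 else 0)
          + (if i = (⟨d-1, by omega⟩ : Fin d) then 1/2 else 0) := by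
        intro i
        unfold Amat; simp only [Matrix.of_apply]
        by_cases hi0 : (i:ℕ) = 0
        · rw [if_neg (by omega), if_pos ⟨hj1, Or.inl hi0⟩, if_pos (Fin.ext hi0),
            if_neg (fun h => by have := congrArg Fin.val h; simp at this; omega)]
          norm_num
        · by_cases hid : (i:ℕ) = d-1
          · rw [if_neg (by omega), if_pos ⟨hj1, Or.inr hid⟩,
              if_neg (fun h => hi0 (by rw [h])), if_pos (Fin.ext hid)]
            norm_num
          · rw [if_neg (by omega), if_neg (by omega), if_neg (by omega),
              if_neg (fun h => hi0 (by rw [h])), if_neg (fun h => hid (by rw [h]))]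
            norm_num
      rw [Finset.sum_congr rfl fun i _ => hfun i, Finset.sum_add_distrib,
        Finset.sum_ite_eq' Finset.univ _ (fun _ => (1/2:ℝ)),
        Finset.sum_ite_eq' Finset.univ _ (fun _ => (1/2:ℝ))]
      simp; norm_num
    · have hj2 : 2 ≤ (j:ℕ) := by omega
      have hfun : ∀ i : Fin d, Amat d i j = if i = (⟨(j:ℕ)-1, by omega⟩ : Fin d) then 1 else 0 := by
        intro i
        unfold Amat; simp only [Matrix.of_apply]
        by_cases hi : (i:ℕ) = (j:ℕ)-1
        · rw [if_neg (by omega), if_neg (by omega), if_pos ⟨hj2, by omega⟩, if_pos (Fin.ext hi)]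
        · rw [if_neg (by omega), if_neg (by omega), if_neg (by omega),
            if_neg (fun h => hi (by rw [h]))]
      rw [Finset.sum_congr rfl fun i _ => hfun i,
        Finset.sum_ite_eq' Finset.univ _ (fun _ => (1:ℝ))]
      simp

noncomputable def kra (d : ℕ) (a b : Fin d) : Mat d :=
  Matrix.single a b ((Real.sqrt (Amat d a b) : ℝ) : ℂ)

lemma kra_conj (a b : Fin d) :
    (kra d a b)ᴴ = Matrix.single b a ((Real.sqrt (Amat d a b) : ℝ) : ℂ) := by
  ext r s
  rw [Matrix.conjTranspose_apply]
  unfold kra Matrix.single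
  simp only [Matrix.of_apply]
  rw [apply_ite (star : ℂ → ℂ)]
  simp [Complex.star_def, Complex.conj_ofReal, and_comm]

lemma kra_term (X : Mat d) (a b r s : Fin d) :
    (kra d a b * X * (kra d a b)ᴴ) r s
      = if r = a ∧ s = a then ((Amat d a b : ℝ) : ℂ) * X b b else 0 := by
  rw [kra_conj]
  by_cases hs : s = a
  · rw [hs]
    rw [Matrix.mul_single_apply_same]
    by_cases hr : r = a
    · rw [hr]
      unfold kra
      rw [Matrix.single_mul_apply_same, if_pos ⟨rfl, rfl⟩]
      have hc : ((Real.sqrt (Amat d a b) : ℝ):ℂ) * X b b * ((Real.sqrt (Amat d a b) : ℝ):ℂ)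
          = ((Real.sqrt (Amat d a b) * Real.sqrt (Amat d a b) : ℝ):ℂ) * X b b := by
        push_cast; ring
      rw [hc, Real.mul_self_sqrt (amat_nonneg _ _)]
    · unfold kra
      rw [Matrix.single_mul_apply_of_ne (h := hr), if_neg (fun h => hr h.1), zero_mul]
  · rw [Matrix.mul_single_apply_of_ne (hbj := hs), if_neg (fun h => hs h.2)]

lemma kra_sq (a b r s : Fin d) :
    ((kra d a b)ᴴ * kra d a b) r s = if r = b ∧ s = b then ((Amat d a b : ℝ) : ℂ) else 0 := by
  rw [kra_conj]
  unfold kra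
  rw [Matrix.single_mul_single_same]
  have hc : ((Real.sqrt (Amat d a b) : ℝ):ℂ) * ((Real.sqrt (Amat d a b) : ℝ):ℂ)
      = ((Amat d a b : ℝ) : ℂ) := by
    rw [← Complex.ofReal_mul, Real.mul_self_sqrt (amat_nonneg _ _)]
  rw [hc]
  by_cases h : r = b ∧ s = b
  · obtain ⟨h1, h2⟩ := h; subst h1; subst h2
    rw [if_pos ⟨rfl, rfl⟩, Matrix.single_apply_same]
  · rw [if_neg h]
    exact Matrix.single_apply_of_ne b b _ r s
      (fun hh => h ⟨hh.1.symm, hh.2.symm⟩)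

lemma isChannel_cc (hd : 2 ≤ d) : IsChannel (classicalChannel (Amat d)) := by
  refine ⟨d*d, fun m => kra d (finProdFinEquiv.symm m).1 (finProdFinEquiv.symm m).2, ?_, ?_⟩
  · intro X
    have hconv : ∑ m : Fin (d*d), kra d (finProdFinEquiv.symm m).1 (finProdFinEquiv.symm m).2 * X *
          (kra d (finProdFinEquiv.symm m).1 (finProdFinEquiv.symm m).2)ᴴ
        = ∑ p : Fin d × Fin d, kra d p.1 p.2 * X * (kra d p.1 p.2)ᴴ :=
      Equiv.sum_comp finProdFinEquiv.symm (fun p => kra d p.1 p.2 * X * (kra d p.1 p.2)ᴴ)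
    rw [hconv, Fintype.sum_prod_type]
    ext r s
    simp only [Matrix.sum_apply]
    rw [Finset.sum_congr rfl fun a (_ : a ∈ Finset.univ) =>
      Finset.sum_congr rfl fun b (_ : b ∈ Finset.univ) => kra_term X a b r s]
    rw [cc_apply]
    by_cases hrs : r = s
    · subst hrs
      rw [if_pos rfl]
      have hRHS : ∑ a : Fin d, ∑ b : Fin d,
          (if r = a ∧ r = a then ((Amat d a b : ℝ):ℂ) * X b b else 0)
          = ∑ b : Fin d, ((Amat d r b : ℝ):ℂ) * X b b := by
        rw [Finset.sum_eq_single r]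
        · exact Finset.sum_congr rfl fun b _ => if_pos ⟨rfl, rfl⟩
        · intro a _ ha
          exact Finset.sum_eq_zero fun b _ => if_neg (fun h => ha h.1.symm)
        · intro hmem; exact absurd (Finset.mem_univ r) hmem
      rw [hRHS]
    · rw [if_neg hrs]
      exact (Finset.sum_eq_zero fun a _ => Finset.sum_eq_zero fun b _ =>
        if_neg (fun h => hrs (h.1.trans h.2.symm))).symm
  · have hconv : ∑ m : Fin (d*d), (kra d (finProdFinEquiv.symm m).1 (finProdFinEquiv.symm m).2)ᴴ *
          kra d (finProdFinEquiv.symm m).1 (finProdFinEquiv.symm m).2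
        = ∑ p : Fin d × Fin d, (kra d p.1 p.2)ᴴ * kra d p.1 p.2 :=
      Equiv.sum_comp finProdFinEquiv.symm (fun p => (kra d p.1 p.2)ᴴ * kra d p.1 p.2)
    rw [hconv, Fintype.sum_prod_type]
    ext r s
    simp only [Matrix.sum_apply]
    rw [Finset.sum_congr rfl fun a (_ : a ∈ Finset.univ) =>
      Finset.sum_congr rfl fun b (_ : b ∈ Finset.univ) => kra_sq a b r s]
    by_cases hrs : r = s
    · subst hrs
      have hRHS : ∑ a : Fin d, ∑ b : Fin d,
          (if r = b ∧ r = b then ((Amat d a b : ℝ):ℂ) else 0) = ((1:ℝ):ℂ) := by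
        rw [Finset.sum_comm, Finset.sum_eq_single r]
        · rw [Finset.sum_congr rfl fun a (_ : a ∈ Finset.univ) =>
            if_pos (⟨rfl, rfl⟩ : r = r ∧ r = r), ← Complex.ofReal_sum, amat_colsum hd r]
        · intro b _ hb
          exact Finset.sum_eq_zero fun a _ => if_neg (fun h => hb h.1.symm)
        · intro hmem; exact absurd (Finset.mem_univ r) hmem
      rw [hRHS, Matrix.one_apply_eq]
      simp
    · rw [Matrix.one_apply_ne hrs]
      exact Finset.sum_eq_zero fun a _ => Finset.sum_eq_zero fun b _ =>
        if_neg (fun h => hrs (h.1.trans h.2.symm))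

-- ===================== final assembly =====================

lemma cTime_eq (hd : 2 ≤ d) :
    cTime (classicalChannel (Amat d) : Module.End ℂ (Mat d))
      = (((d^2 - 2*d + 3)/2 : ℕ) : ℕ∞) := by
  set N := (d^2-2*d+3)/2 with hNdef
  have hpw : d^2 = d*d := pow_two d
  have hN1 : 1 ≤ N := by
    have h2 : 2*d ≤ d*d := Nat.mul_le_mul_right d hd
    omega
  apply le_antisymm
  · apply sInf_le
    refine ⟨N, rfl, hN1, ?_⟩
    obtain ⟨k, hk⟩ : ∃ k, N = k + 1 := ⟨N-1, by omega⟩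
    rw [hk, cc_pow]
    apply cscr_of_matscr (fun i j => apow_nonneg _ _ _)
    intro i j
    obtain ⟨z, h1, h2⟩ := meet_at_N hd i j
    rw [hNdef] at hk
    rw [← hk]
    exact ⟨z, mul_pos h1 h2⟩
  · apply le_sInf
    rintro m ⟨k, rfl, hk1, hscr⟩
    simp only [Nat.cast_le]
    by_contra hlt
    push_neg at hlt
    obtain ⟨k', hk'⟩ : ∃ k', k = k' + 1 := ⟨k-1, by omega⟩
    rw [hk', cc_pow] at hscr
    have hx12 : (⟨0, by omega⟩ : Fin d) ≠ (⟨d - d/2, by omega⟩ : Fin d) := by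
      intro h
      have := congrArg Fin.val h
      simp only [] at this
      omega
    refine not_cscr (fun i j => apow_nonneg _ _ _) hx12 ?_ hscr
    intro i
    have hkn : k ≤ (d^2-2*d+3)/2 - 1 := by omega
    have := no_meet hd k hkn i
    rwa [hk'] at this

end Scram

/-- The classical channel of the stochastic matrix `A_d` has classical
scrambling time `⌈(d² − 2d + 2)/2⌉`; in particular there is a channel on `M_d(ℂ)`
attaining this scrambling time. -/
theorem scrambling_time_of_Amat (d : ℕ) (hd : 2 ≤ d) :
    cTime (classicalChannel (Amat d)) = (((d ^ 2 - 2 * d + 3) / 2 : ℕ) : ℕ∞) ∧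
    ∃ Φ : Module.End ℂ (Mat d), IsChannel Φ ∧
      cTime Φ = (((d ^ 2 - 2 * d + 3) / 2 : ℕ) : ℕ∞) :=
  ⟨Scram.cTime_eq hd, classicalChannel (Amat d), Scram.isChannel_cc hd, Scram.cTime_eq hd⟩
end

section
/- Let A ∈ M_d(ℝ) be column stochastic and let Φ_A be the associated classical channel on M_d(ℂ). If Φ_A is c-scrambling, then the one-shot zero-error entanglement-assisted classical capacity of Φ_A vanishes, i.e. for all d₀, d₁ ≥ 1, every unit vector |ψ⟩ ∈ ℂ^{d₀} ⊗ ℂ^{d₁}, and every pair of quantum channels E₁, E₂ : M_{d₀}(ℂ) → M_d(ℂ), one has Tr[((Φ_A ∘ E₁) ⊗ id)(|ψ⟩⟨ψ|) · ((Φ_A ∘ E₂) ⊗ id)(|ψ⟩⟨ψ|)] > 0. Consequently c(Φ_A) = c_E(Φ_A). -/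
open Matrix Filter
open scoped ComplexOrder

-- auxiliary lemmas
lemma classicalChannel_apply {d : ℕ} (A : Matrix (Fin d) (Fin d) ℝ) (X : Mat d)
    (i j : Fin d) :
    classicalChannel A X i j = if i = j then ∑ k, (A i k : ℂ) * X k k else 0 := by
  simp [classicalChannel, cducMap]

/-- Rank-one preparation channel `X ↦ X₀₀ • |u⟩⟨u|`. -/
noncomputable def purePrep {n : ℕ} (u : Fin n → ℂ) : Mat 1 →ₗ[ℂ] Mat n where
  toFun X := X 0 0 • pureState u
  map_add' X Y := by simp [add_smul, Matrix.add_apply]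
  map_smul' c X := by simp [Matrix.smul_apply, smul_smul, smul_eq_mul]

lemma purePrep_channel {n : ℕ} (u : Fin n → ℂ) (hu : IsUnitVec u) :
    IsChannel (purePrep u) := by
  refine ⟨1, fun _ => Matrix.of fun r (_ : Fin 1) => u r, ?_, ?_⟩
  · intro X
    ext r s
    simp [purePrep, Matrix.mul_apply, pureState, Fin.sum_univ_one]; ring
  · ext a b
    have ha : a = 0 := Subsingleton.elim _ _
    have hb : b = 0 := Subsingleton.elim _ _
    subst ha; subst hb
    simpa [Matrix.mul_apply, Matrix.conjTranspose_apply, Matrix.one_apply,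
      Fin.sum_univ_one, IsUnitVec] using hu
lemma cscrambling_of_vanishing {n : ℕ} (Φ : Mat n →ₗ[ℂ] Mat n) (h : VanishingC0E Φ) :
    CScrambling Φ := by
  intro ψ φ hψ hφ _
  have hunit : IsUnitVec (fun _ : Fin 1 × Fin 1 => (1 : ℂ)) := by
    simp [IsUnitVec]
  have h1 := h 1 1 one_pos one_pos (fun _ => 1) hunit (purePrep ψ) (purePrep φ)
    (purePrep_channel ψ hψ) (purePrep_channel φ hφ)
  have key : ∀ u : Fin n → ℂ,
      tensorId (Φ ∘ₗ purePrep u) (pureState (fun _ : Fin 1 × Fin 1 => (1 : ℂ)))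
        = Matrix.of fun (p q : Fin n × Fin 1) => Φ (pureState u) p.1 q.1 := by
    intro u
    ext p q
    simp only [tensorId, Matrix.of_apply, LinearMap.comp_apply]
    have : (Matrix.of fun k l =>
        pureState (fun _ : Fin 1 × Fin 1 => (1 : ℂ)) (k, p.2) (l, q.2)) = (1 : Mat 1) := by
      ext a b
      have ha : a = 0 := Subsingleton.elim _ _
      have hb : b = 0 := Subsingleton.elim _ _
      subst ha; subst hb
      simp [pureState, Matrix.one_apply]
    rw [this]
    have h2 : (purePrep u) (1 : Mat 1) = pureState u := by
      simp [purePrep, Matrix.one_apply]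
    rw [h2]
  rw [key ψ, key φ] at h1
  have tr : (Matrix.of (fun (p q : Fin n × Fin 1) => Φ (pureState ψ) p.1 q.1) *
      Matrix.of (fun (p q : Fin n × Fin 1) => Φ (pureState φ) p.1 q.1)).trace
      = (Φ (pureState ψ) * Φ (pureState φ)).trace := by
    simp [Matrix.trace, Matrix.diag, Matrix.mul_apply, Fintype.sum_prod_type,
      Fin.sum_univ_one]
  rwa [tr] at h1
lemma classicalChannel_mul {d : ℕ} (A B : Matrix (Fin d) (Fin d) ℝ) :
    (classicalChannel A : Module.End ℂ (Mat d)) * classicalChannel B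
      = classicalChannel (A * B) := by
  apply LinearMap.ext; intro X
  ext i j
  rw [Module.End.mul_apply, classicalChannel_apply, classicalChannel_apply]
  by_cases h : i = j
  · subst h
    simp only [if_pos rfl]
    calc ∑ k, (A i k : ℂ) * classicalChannel B X k k
        = ∑ k, ∑ m, (A i k : ℂ) * ((B k m : ℂ) * X m m) := by
          refine Finset.sum_congr rfl fun k _ => ?_
          rw [classicalChannel_apply, if_pos rfl, Finset.mul_sum]
      _ = ∑ m, (((A * B) i m : ℝ) : ℂ) * X m m := by
          rw [Finset.sum_comm]
          refine Finset.sum_congr rfl fun m _ => ?_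
          rw [Matrix.mul_apply]
          push_cast
          rw [Finset.sum_mul]
          exact Finset.sum_congr rfl fun k _ => by ring
  · simp [h]

lemma classicalChannel_pow {d : ℕ} (A : Matrix (Fin d) (Fin d) ℝ) :
    ∀ k : ℕ, 1 ≤ k →
      (classicalChannel A : Module.End ℂ (Mat d)) ^ k = classicalChannel (A ^ k) := by
  intro k hk
  induction k with
  | zero => omega
  | succ m ih =>
    rcases Nat.eq_or_lt_of_le hk with h1 | h1
    · rw [← h1]
      simp [pow_one]
    · have hm : 1 ≤ m := by omega
      rw [pow_succ, ih hm, classicalChannel_mul, ← pow_succ]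

lemma columnStochastic_pow {d : ℕ} (A : Matrix (Fin d) (Fin d) ℝ)
    (hA : ColumnStochastic A) (k : ℕ) : ColumnStochastic (A ^ k) := by
  induction k with
  | zero =>
    constructor
    · intro i j
      simp [Matrix.one_apply]
      positivity
    · intro j
      simp [Matrix.one_apply]
  | succ m ih =>
    rw [pow_succ]
    constructor
    · intro i j
      rw [Matrix.mul_apply]
      exact Finset.sum_nonneg fun m' _ => mul_nonneg (ih.1 _ _) (hA.1 _ _)
    · intro j
      simp only [Matrix.mul_apply]
      rw [Finset.sum_comm]
      calc ∑ m', ∑ i, (A ^ m) i m' * A m' j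
          = ∑ m', A m' j := by
            refine Finset.sum_congr rfl fun m' _ => ?_
            rw [← Finset.sum_mul, ih.2, one_mul]
        _ = 1 := hA.2 j
lemma colstoch_overlap {d : ℕ} (A : Matrix (Fin d) (Fin d) ℝ)
    (hA : ColumnStochastic A) (hC : CScrambling (classicalChannel A)) :
    ∀ k l : Fin d, 0 < ∑ i, (A i k : ℂ) * A i l := by
  intro k l
  by_cases hkl : k = l
  · subst hkl
    obtain ⟨i₀, _, hi₀⟩ : ∃ i ∈ Finset.univ, 0 < A i k := by
      by_contra hcon
      push_neg at hcon
      have : ∑ i, A i k ≤ 0 := Finset.sum_nonpos fun i hi => hcon i hi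
      rw [hA.2 k] at this; linarith
    have hr : (0 : ℝ) < ∑ i, A i k * A i k :=
      Finset.sum_pos' (fun i _ => mul_nonneg (hA.1 i k) (hA.1 i k))
        ⟨i₀, Finset.mem_univ _, mul_pos hi₀ hi₀⟩
    have : (∑ i, (A i k : ℂ) * A i k) = ((∑ i, A i k * A i k : ℝ) : ℂ) := by push_cast; rfl
    rw [this]
    exact Complex.zero_lt_real.mpr hr
  · set e : Fin d → Fin d → ℂ := fun m x => if x = m then 1 else 0 with he
    have hunit : ∀ m, IsUnitVec (e m) := by
      intro m
      simp [IsUnitVec, he, apply_ite (star : ℂ → ℂ)]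
    have horth : ∑ i, star (e k i) * e l i = 0 := by
      refine Finset.sum_eq_zero fun i _ => ?_
      by_cases h1 : i = k
      · subst h1; simp [he, hkl]
      · simp [he, h1]
    have h := hC (e k) (e l) (hunit k) (hunit l) horth
    have hdiag : ∀ m i j : Fin d, classicalChannel A (pureState (e m)) i j
        = if i = j then (A i m : ℂ) else 0 := by
      intro m i j
      rw [classicalChannel_apply]
      by_cases hij : i = j
      · simp only [if_pos hij]
        rw [Finset.sum_eq_single m]
        · simp [pureState, he]
        · intro x _ hx; simp [pureState, he, hx]
        · simp
      · simp [hij]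
    have htr : (classicalChannel A (pureState (e k)) *
        classicalChannel A (pureState (e l))).trace = ∑ i, (A i k : ℂ) * A i l := by
      rw [Matrix.trace]
      refine Finset.sum_congr rfl fun i _ => ?_
      rw [Matrix.diag_apply, Matrix.mul_apply]
      rw [Finset.sum_eq_single i]
      · rw [hdiag, hdiag]; simp
      · intro j _ hj
        rw [hdiag, hdiag]
        simp [Ne.symm hj]
      · simp
    rwa [htr] at h
lemma sum_swap4 {ι₁ ι₂ ι₃ ι₄ M : Type*} [Fintype ι₁] [Fintype ι₂] [Fintype ι₃] [Fintype ι₄]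
    [AddCommMonoid M] (f : ι₁ → ι₂ → ι₃ → ι₄ → M) :
    ∑ a, ∑ b, ∑ c, ∑ e, f a b c e = ∑ c, ∑ e, ∑ a, ∑ b, f a b c e := by
  calc ∑ a, ∑ b, ∑ c, ∑ e, f a b c e
      = ∑ a, ∑ c, ∑ b, ∑ e, f a b c e :=
        Finset.sum_congr rfl fun a _ => Finset.sum_comm
    _ = ∑ c, ∑ a, ∑ b, ∑ e, f a b c e := Finset.sum_comm
    _ = ∑ c, ∑ a, ∑ e, ∑ b, f a b c e :=
        Finset.sum_congr rfl fun c _ => Finset.sum_congr rfl fun a _ => Finset.sum_comm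
    _ = ∑ c, ∑ e, ∑ a, ∑ b, f a b c e :=
        Finset.sum_congr rfl fun c _ => Finset.sum_comm

lemma sum_swap5 {ι₁ ι₂ ι₃ ι₄ ι₅ M : Type*}
    [Fintype ι₁] [Fintype ι₂] [Fintype ι₃] [Fintype ι₄] [Fintype ι₅]
    [AddCommMonoid M] (f : ι₁ → ι₂ → ι₃ → ι₄ → ι₅ → M) :
    ∑ a, ∑ b, ∑ c, ∑ e, ∑ g, f a b c e g = ∑ e, ∑ g, ∑ a, ∑ b, ∑ c, f a b c e g := by
  calc ∑ a, ∑ b, ∑ c, ∑ e, ∑ g, f a b c e g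
      = ∑ a, ∑ e, ∑ g, ∑ b, ∑ c, f a b c e g :=
        Finset.sum_congr rfl fun a _ => sum_swap4 _
    _ = ∑ e, ∑ a, ∑ g, ∑ b, ∑ c, f a b c e g := Finset.sum_comm
    _ = ∑ e, ∑ g, ∑ a, ∑ b, ∑ c, f a b c e g :=
        Finset.sum_congr rfl fun e _ => Finset.sum_comm
lemma vanishing_of_cscrambling {d : ℕ} (A : Matrix (Fin d) (Fin d) ℝ)
    (hA : ColumnStochastic A) (hC : CScrambling (classicalChannel A)) :
    VanishingC0E (classicalChannel A) := by
  have hc := colstoch_overlap A hA hC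
  intro d₀ d₁ _ _ ψ hψ E₁ E₂ hE₁ hE₂
  obtain ⟨p₁, K₁, hK₁, hN₁⟩ := hE₁
  obtain ⟨p₂, K₂, hK₂, hN₂⟩ := hE₂
  -- block entries of the two input states
  set P : Fin d → Fin d₁ → Fin d₁ → ℂ := fun k a b =>
    ∑ m, (∑ x, K₁ m k x * ψ (x, a)) * star (∑ y, K₁ m k y * ψ (y, b)) with hPdef
  set Q : Fin d → Fin d₁ → Fin d₁ → ℂ := fun k a b =>
    ∑ m, (∑ x, K₂ m k x * ψ (x, a)) * star (∑ y, K₂ m k y * ψ (y, b)) with hQdef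
  -- diagonal blocks of channel outputs
  have block : ∀ (p : ℕ) (K : Fin p → Matrix (Fin d) (Fin d₀) ℂ)
      (E : Matrix (Fin d₀) (Fin d₀) ℂ →ₗ[ℂ] Mat d),
      (∀ X, E X = ∑ i, K i * X * (K i)ᴴ) → ∀ (a b : Fin d₁) (k : Fin d),
      E (Matrix.of fun x y => pureState ψ (x, a) (y, b)) k k
        = ∑ m, (∑ x, K m k x * ψ (x, a)) * star (∑ y, K m k y * ψ (y, b)) := by
    intro p K E hK a b k
    rw [hK, Matrix.sum_apply]
    refine Finset.sum_congr rfl fun m _ => ?_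
    rw [star_sum, Finset.sum_mul_sum]
    simp only [Matrix.mul_apply, Matrix.conjTranspose_apply, Matrix.of_apply, pureState,
      Finset.sum_mul]
    rw [Finset.sum_comm]
    refine Finset.sum_congr rfl fun x _ => Finset.sum_congr rfl fun y _ => ?_
    rw [star_mul']
    ring
  -- partial trace over the first factor is independent of the channel
  have key : ∀ (p : ℕ) (K : Fin p → Matrix (Fin d) (Fin d₀) ℂ),
      (∑ i, (K i)ᴴ * K i = 1) → ∀ (a b : Fin d₁),
      (∑ k, ∑ m, (∑ x, K m k x * ψ (x, a)) * star (∑ y, K m k y * ψ (y, b)))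
        = ∑ x, ψ (x, a) * star (ψ (x, b)) := by
    intro p K hN a b
    have hone : ∀ x y : Fin d₀,
        (∑ m, ∑ k, star (K m k y) * K m k x) = if y = x then 1 else 0 := by
      intro x y
      have h0 : (∑ i, (K i)ᴴ * K i) y x = (1 : Matrix (Fin d₀) (Fin d₀) ℂ) y x := by
        rw [hN]
      simpa [Matrix.sum_apply, Matrix.mul_apply, Matrix.conjTranspose_apply,
        Matrix.one_apply] using h0
    calc ∑ k, ∑ m, (∑ x, K m k x * ψ (x, a)) * star (∑ y, K m k y * ψ (y, b))
        = ∑ k, ∑ m, ∑ x, ∑ y,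
            (ψ (x, a) * star (ψ (y, b))) * (star (K m k y) * K m k x) := by
          refine Finset.sum_congr rfl fun k _ => Finset.sum_congr rfl fun m _ => ?_
          rw [star_sum, Finset.sum_mul_sum]
          refine Finset.sum_congr rfl fun x _ => Finset.sum_congr rfl fun y _ => ?_
          rw [star_mul']
          ring
      _ = ∑ x, ∑ y, ∑ k, ∑ m,
            (ψ (x, a) * star (ψ (y, b))) * (star (K m k y) * K m k x) := sum_swap4 _
      _ = ∑ x, ∑ y,
            (ψ (x, a) * star (ψ (y, b))) * ∑ m, ∑ k, star (K m k y) * K m k x := by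
          refine Finset.sum_congr rfl fun x _ => Finset.sum_congr rfl fun y _ => ?_
          rw [Finset.sum_comm]
          simp only [← Finset.mul_sum]
      _ = ∑ x, ∑ y, (ψ (x, a) * star (ψ (y, b))) * (if y = x then 1 else 0) := by
          refine Finset.sum_congr rfl fun x _ => Finset.sum_congr rfl fun y _ => ?_
          rw [hone x y]
      _ = ∑ x, ψ (x, a) * star (ψ (x, b)) := by
          refine Finset.sum_congr rfl fun x _ => ?_
          simp [mul_ite, Finset.sum_ite_eq']
  -- T is entrywise nonnegative
  have hTnn : ∀ k l : Fin d, 0 ≤ ∑ a, ∑ b, P k a b * Q l b a := by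
    intro k l
    have expand : ∑ a, ∑ b, P k a b * Q l b a
        = ∑ m, ∑ m', (∑ a, (∑ x, K₁ m k x * ψ (x, a)) * star (∑ x, K₂ m' l x * ψ (x, a))) *
            star (∑ a, (∑ x, K₁ m k x * ψ (x, a)) * star (∑ x, K₂ m' l x * ψ (x, a))) := by
      calc ∑ a, ∑ b, P k a b * Q l b a
          = ∑ a, ∑ b, ∑ m, ∑ m',
              ((∑ x, K₁ m k x * ψ (x, a)) * star (∑ y, K₁ m k y * ψ (y, b))) *
              ((∑ x, K₂ m' l x * ψ (x, b)) * star (∑ y, K₂ m' l y * ψ (y, a))) := by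
            refine Finset.sum_congr rfl fun a _ => Finset.sum_congr rfl fun b _ => ?_
            rw [hPdef, hQdef, Finset.sum_mul_sum]
        _ = ∑ m, ∑ m', ∑ a, ∑ b,
              ((∑ x, K₁ m k x * ψ (x, a)) * star (∑ y, K₁ m k y * ψ (y, b))) *
              ((∑ x, K₂ m' l x * ψ (x, b)) * star (∑ y, K₂ m' l y * ψ (y, a))) := sum_swap4 _
        _ = _ := by
            refine Finset.sum_congr rfl fun m _ => Finset.sum_congr rfl fun m' _ => ?_
            rw [star_sum, Finset.sum_mul_sum]
            refine Finset.sum_congr rfl fun a _ => Finset.sum_congr rfl fun b _ => ?_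
            rw [star_mul', star_star]
            ring
    rw [expand]
    refine Finset.sum_nonneg fun m _ => Finset.sum_nonneg fun m' _ => ?_
    rw [Complex.star_def, Complex.mul_conj]
    exact Complex.zero_le_real.mpr (Complex.normSq_nonneg _)
  -- total sum of T is positive
  have hsumT : ∑ k, ∑ l, ∑ a, ∑ b, P k a b * Q l b a
      = ∑ a, ∑ b, (∑ x, ψ (x, a) * star (ψ (x, b))) *
          star (∑ x, ψ (x, a) * star (ψ (x, b))) := by
    calc ∑ k, ∑ l, ∑ a, ∑ b, P k a b * Q l b a
        = ∑ a, ∑ b, ∑ k, ∑ l, P k a b * Q l b a := sum_swap4 _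
      _ = ∑ a, ∑ b, (∑ k, P k a b) * (∑ l, Q l b a) := by
          refine Finset.sum_congr rfl fun a _ => Finset.sum_congr rfl fun b _ => ?_
          rw [Finset.sum_mul_sum]
      _ = _ := by
          refine Finset.sum_congr rfl fun a _ => Finset.sum_congr rfl fun b _ => ?_
          rw [hPdef, hQdef, key p₁ K₁ hN₁ a b, key p₂ K₂ hN₂ b a]
          congr 1
          rw [star_sum]
          refine Finset.sum_congr rfl fun x _ => ?_
          rw [star_mul', star_star]
          ring
  have hpos : 0 < ∑ a, ∑ b, (∑ x, ψ (x, a) * star (ψ (x, b))) *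
      star (∑ x, ψ (x, a) * star (ψ (x, b))) := by
    have hterm : ∀ a b : Fin d₁, 0 ≤ (∑ x, ψ (x, a) * star (ψ (x, b))) *
        star (∑ x, ψ (x, a) * star (ψ (x, b))) := by
      intro a b
      rw [Complex.star_def, Complex.mul_conj]
      exact Complex.zero_le_real.mpr (Complex.normSq_nonneg _)
    have hdiag : ∑ a, ∑ x, ψ (x, a) * star (ψ (x, a)) = 1 := by
      rw [← hψ, Fintype.sum_prod_type]
      rw [Finset.sum_comm]
      exact Finset.sum_congr rfl fun a _ => Finset.sum_congr rfl fun x _ => mul_comm _ _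
    obtain ⟨a₀, _, ha₀⟩ : ∃ a ∈ Finset.univ, ∑ x, ψ (x, a) * star (ψ (x, a)) ≠ 0 :=
      Finset.exists_ne_zero_of_sum_ne_zero (by rw [hdiag]; exact one_ne_zero)
    have hpos₀ : 0 < (∑ x, ψ (x, a₀) * star (ψ (x, a₀))) *
        star (∑ x, ψ (x, a₀) * star (ψ (x, a₀))) := by
      rw [Complex.star_def, Complex.mul_conj]
      exact Complex.zero_lt_real.mpr (Complex.normSq_pos.mpr ha₀)
    refine Finset.sum_pos' (fun a _ => Finset.sum_nonneg fun b _ => hterm a b)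
      ⟨a₀, Finset.mem_univ _, Finset.sum_pos' (fun b _ => hterm a₀ b)
        ⟨a₀, Finset.mem_univ _, hpos₀⟩⟩
  -- a strictly positive entry of T
  obtain ⟨k₀, l₀, hT₀⟩ : ∃ k l : Fin d, 0 < ∑ a, ∑ b, P k a b * Q l b a := by
    have hne : ∑ k, ∑ l, ∑ a, ∑ b, P k a b * Q l b a ≠ 0 := by
      rw [hsumT]; exact ne_of_gt hpos
    obtain ⟨k₀, _, hk₀⟩ := Finset.exists_ne_zero_of_sum_ne_zero hne
    obtain ⟨l₀, _, hl₀⟩ := Finset.exists_ne_zero_of_sum_ne_zero hk₀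
    exact ⟨k₀, l₀, lt_of_le_of_ne (hTnn k₀ l₀) (Ne.symm hl₀)⟩
  -- entries of the channel outputs
  have hM₁ : ∀ pp qq : Fin d × Fin d₁,
      tensorId (classicalChannel A ∘ₗ E₁) (pureState ψ) pp qq
        = if pp.1 = qq.1 then ∑ k, (A pp.1 k : ℂ) * P k pp.2 qq.2 else 0 := by
    intro pp qq
    show classicalChannel A (E₁ (Matrix.of fun x y => pureState ψ (x, pp.2) (y, qq.2)))
        pp.1 qq.1 = _
    rw [classicalChannel_apply]
    by_cases h : pp.1 = qq.1
    · simp only [if_pos h]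
      refine Finset.sum_congr rfl fun k _ => ?_
      rw [block p₁ K₁ E₁ hK₁, hPdef]
    · simp [h]
  have hM₂ : ∀ pp qq : Fin d × Fin d₁,
      tensorId (classicalChannel A ∘ₗ E₂) (pureState ψ) pp qq
        = if pp.1 = qq.1 then ∑ k, (A pp.1 k : ℂ) * Q k pp.2 qq.2 else 0 := by
    intro pp qq
    show classicalChannel A (E₂ (Matrix.of fun x y => pureState ψ (x, pp.2) (y, qq.2)))
        pp.1 qq.1 = _
    rw [classicalChannel_apply]
    by_cases h : pp.1 = qq.1
    · simp only [if_pos h]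
      refine Finset.sum_congr rfl fun k _ => ?_
      rw [block p₂ K₂ E₂ hK₂, hQdef]
    · simp [h]
  -- the trace formula
  have htrace : (tensorId (classicalChannel A ∘ₗ E₁) (pureState ψ) *
      tensorId (classicalChannel A ∘ₗ E₂) (pureState ψ)).trace
      = ∑ k, ∑ l, (∑ i, (A i k : ℂ) * A i l) * (∑ a, ∑ b, P k a b * Q l b a) := by
    calc (tensorId (classicalChannel A ∘ₗ E₁) (pureState ψ) *
        tensorId (classicalChannel A ∘ₗ E₂) (pureState ψ)).trace
        = ∑ i, ∑ a, ∑ b, (∑ k, (A i k : ℂ) * P k a b) * (∑ l, (A i l : ℂ) * Q l b a) := by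
          rw [Matrix.trace]
          rw [Fintype.sum_prod_type]
          refine Finset.sum_congr rfl fun i _ => Finset.sum_congr rfl fun a _ => ?_
          rw [Matrix.diag_apply, Matrix.mul_apply, Fintype.sum_prod_type]
          rw [Finset.sum_eq_single i]
          · refine Finset.sum_congr rfl fun b _ => ?_
            rw [hM₁, hM₂]
            simp
          · intro j _ hj
            refine Finset.sum_eq_zero fun b _ => ?_
            rw [hM₁]
            simp [Ne.symm hj]
          · simp
      _ = ∑ i, ∑ a, ∑ b, ∑ k, ∑ l,
            ((A i k : ℂ) * P k a b) * ((A i l : ℂ) * Q l b a) := by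
          refine Finset.sum_congr rfl fun i _ => Finset.sum_congr rfl fun a _ =>
            Finset.sum_congr rfl fun b _ => ?_
          rw [Finset.sum_mul_sum]
      _ = ∑ k, ∑ l, ∑ i, ∑ a, ∑ b,
            ((A i k : ℂ) * P k a b) * ((A i l : ℂ) * Q l b a) := sum_swap5 _
      _ = _ := by
          refine Finset.sum_congr rfl fun k _ => Finset.sum_congr rfl fun l _ => ?_
          rw [Finset.sum_mul]
          refine Finset.sum_congr rfl fun i _ => ?_
          rw [Finset.mul_sum]
          refine Finset.sum_congr rfl fun a _ => ?_
          rw [Finset.mul_sum]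
          refine Finset.sum_congr rfl fun b _ => ?_
          ring
  rw [htrace]
  refine Finset.sum_pos'
    (fun k _ => Finset.sum_nonneg fun l _ => mul_nonneg (le_of_lt (hc k l)) (hTnn k l))
    ⟨k₀, Finset.mem_univ _, Finset.sum_pos'
      (fun l _ => mul_nonneg (le_of_lt (hc k₀ l)) (hTnn k₀ l))
      ⟨l₀, Finset.mem_univ _, mul_pos (hc k₀ l₀) hT₀⟩⟩
/-- If the classical channel `Φ_A` of a column stochastic matrix `A` is
c-scrambling, then its one-shot zero-error entanglement-assisted classical capacity
vanishes; consequently `c(Φ_A) = c_E(Φ_A)`. -/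
theorem classical_scrambling_ea (d : ℕ) (A : Matrix (Fin d) (Fin d) ℝ)
    (hA : ColumnStochastic A) :
    (CScrambling (classicalChannel A) → VanishingC0E (classicalChannel A)) ∧
    cTime (classicalChannel A) = cETime (classicalChannel A) := by
  constructor
  · exact vanishing_of_cscrambling A hA
  · unfold cTime cETime
    congr 1
    ext N
    simp only [Set.mem_setOf_eq]
    constructor
    · rintro ⟨k, rfl, hk, hsc⟩
      refine ⟨k, rfl, hk, ?_⟩
      rw [classicalChannel_pow A k hk] at hsc ⊢
      exact vanishing_of_cscrambling _ (columnStochastic_pow A hA k) hsc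
    · rintro ⟨k, rfl, hk, hva⟩
      refine ⟨k, rfl, hk, ?_⟩
      rw [classicalChannel_pow A k hk] at hva ⊢
      exact cscrambling_of_vanishing _ hva
end

section
/- For any quantum channel Φ on M_d(ℂ), the fixed-point space Fix_Φ = {A ∈ M_d(ℂ) : Φ(A) = A} is spanned, as a complex vector space, by the quantum states it contains: every A ∈ M_d(ℂ) with Φ(A) = A is a ℂ-linear combination of quantum states ρ satisfying Φ(ρ) = ρ. -/
open Matrix Filter
open scoped ComplexOrder

section Aux
variable {n : ℕ}

lemma psd_trace_nonneg {X : Matrix (Fin n) (Fin n) ℂ} (hX : X.PosSemidef) :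
    0 ≤ X.trace := by
  rw [Matrix.trace]
  refine Finset.sum_nonneg fun i _ => ?_
  have := hX.dotProduct_mulVec_nonneg (Pi.single i 1)
  simpa [dotProduct, Matrix.mulVec, Pi.single_apply, Matrix.diag] using this

lemma psd_trace_eq_zero {X : Matrix (Fin n) (Fin n) ℂ} (hX : X.PosSemidef)
    (h : X.trace = 0) : X = 0 := by
  exact hX.trace_eq_zero_iff.mp h

end Aux

section Chan
variable {d : ℕ} {Φ : Module.End ℂ (Mat d)}

lemma channel_psd (hΦ : IsChannel Φ) {X : Mat d} (hX : X.PosSemidef) :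
    (Φ X).PosSemidef := by
  obtain ⟨p, K, hK, -⟩ := hΦ
  rw [hK]
  refine Finset.sum_induction _ _ (fun a b ha hb => ha.add hb) Matrix.PosSemidef.zero
    (fun i _ => hX.mul_mul_conjTranspose_same _)

lemma channel_trace (hΦ : IsChannel Φ) (X : Mat d) : (Φ X).trace = X.trace := by
  obtain ⟨p, K, hK, hsum⟩ := hΦ
  rw [hK, Matrix.trace_sum]
  calc ∑ i, (K i * X * (K i)ᴴ).trace
      = ∑ i, ((K i)ᴴ * K i * X).trace := by
        refine Finset.sum_congr rfl fun i _ => ?_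
        rw [Matrix.trace_mul_cycle]
    _ = ((∑ i, (K i)ᴴ * K i) * X).trace := by
        rw [Finset.sum_mul, Matrix.trace_sum]
    _ = X.trace := by rw [hsum, Matrix.one_mul]

lemma channel_conjTranspose (hΦ : IsChannel Φ) (X : Mat d) : Φ Xᴴ = (Φ X)ᴴ := by
  obtain ⟨p, K, hK, -⟩ := hΦ
  rw [hK, hK, Matrix.conjTranspose_sum]
  refine Finset.sum_congr rfl fun i _ => ?_
  simp only [Matrix.conjTranspose_mul, Matrix.conjTranspose_conjTranspose, Matrix.mul_assoc]

end Chan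


section Spec
variable {d : ℕ}

private lemma cm_mul_cm (U : Mat d) (hU : Uᴴ * U = 1) (f g : Fin d → ℂ) :
    (U * Matrix.diagonal f * Uᴴ) * (U * Matrix.diagonal g * Uᴴ)
      = U * Matrix.diagonal (fun i => f i * g i) * Uᴴ := by
  simp only [Matrix.mul_assoc]
  rw [← Matrix.mul_assoc Uᴴ U (Matrix.diagonal g * Uᴴ), hU, Matrix.one_mul,
    ← Matrix.mul_assoc (Matrix.diagonal f) (Matrix.diagonal g) Uᴴ,
    Matrix.diagonal_mul_diagonal]

private lemma cm_herm (U : Mat d) (f : Fin d → ℝ) :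
    (U * Matrix.diagonal (fun i => (f i : ℂ)) * Uᴴ).IsHermitian := by
  have hd : (Matrix.diagonal (fun i => (f i : ℂ))).IsHermitian :=
    Matrix.isHermitian_diagonal_of_self_adjoint _
      (funext fun i => Complex.conj_ofReal (f i))
  unfold Matrix.IsHermitian
  simp only [Matrix.conjTranspose_mul, Matrix.conjTranspose_conjTranspose, hd.eq,
    Matrix.mul_assoc]

private lemma cm_psd (U : Mat d) {f : Fin d → ℝ} (hf : ∀ i, 0 ≤ f i) :
    (U * Matrix.diagonal (fun i => (f i : ℂ)) * Uᴴ).PosSemidef := by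
  refine Matrix.PosSemidef.mul_mul_conjTranspose_same ?_ U
  refine Matrix.posSemidef_diagonal_iff.mpr fun i => ?_
  exact_mod_cast hf i

private lemma cm_trace (U : Mat d) (hU : Uᴴ * U = 1) (f : Fin d → ℂ) :
    (U * Matrix.diagonal f * Uᴴ).trace = ∑ i, f i := by
  rw [Matrix.trace_mul_cycle, hU, Matrix.one_mul, Matrix.trace_diagonal]

private lemma cm_sub (U : Mat d) (f g : Fin d → ℂ) :
    (U * Matrix.diagonal f * Uᴴ) - (U * Matrix.diagonal g * Uᴴ)
      = U * Matrix.diagonal (fun i => f i - g i) * Uᴴ := by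
  rw [← Matrix.sub_mul, ← Matrix.mul_sub]
  congr 1
  congr 1
  rw [Matrix.diagonal_sub]

end Spec


section Main
variable {d : ℕ}

private lemma psd_smul {X : Mat d} (hX : X.PosSemidef) {r : ℝ} (hr : 0 ≤ r) :
    (((r : ℂ)) • X).PosSemidef := by
  constructor
  · unfold Matrix.IsHermitian
    rw [Matrix.conjTranspose_smul, hX.1.eq, Complex.star_def, Complex.conj_ofReal]
  · intro x
    exact (hX.smul (Complex.zero_le_real.mpr hr)).2 x

private lemma psd_fixed_mem {Φ : Module.End ℂ (Mat d)} {X : Mat d}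
    (hX : X.PosSemidef) (hfix : Φ X = X) :
    X ∈ Submodule.span ℂ {ρ : Mat d | IsState ρ ∧ Φ ρ = ρ} := by
  by_cases h0 : X = 0
  · simp [h0]
  have hc0 : X.trace ≠ 0 := fun h => h0 (psd_trace_eq_zero hX h)
  have hnn := psd_trace_nonneg hX
  have him : X.trace.im = 0 := (Complex.nonneg_iff.mp hnn).2.symm
  have hre : 0 ≤ X.trace.re := (Complex.nonneg_iff.mp hnn).1
  obtain ⟨r, hr⟩ : ∃ r : ℝ, X.trace = (r : ℂ) :=
    ⟨X.trace.re, by apply Complex.ext <;> simp [him]⟩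
  have hrnn : 0 ≤ r := by
    rw [hr] at hnn
    exact_mod_cast hnn
  have hrne : r ≠ 0 := by
    intro h
    apply hc0
    rw [hr, h, Complex.ofReal_zero]
  set ρ : Mat d := ((r⁻¹ : ℝ) : ℂ) • X with hρ
  have hρpsd : ρ.PosSemidef := psd_smul hX (inv_nonneg.mpr hrnn)
  have hρtr : ρ.trace = 1 := by
    rw [hρ, Matrix.trace_smul, smul_eq_mul, hr, ← Complex.ofReal_mul,
      inv_mul_cancel₀ hrne, Complex.ofReal_one]
  have hρfix : Φ ρ = ρ := by rw [hρ, _root_.map_smul, hfix]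
  have hmem : ρ ∈ Submodule.span ℂ {σ : Mat d | IsState σ ∧ Φ σ = σ} :=
    Submodule.subset_span ⟨⟨hρpsd, hρtr⟩, hρfix⟩
  have hXρ : X = ((r : ℝ) : ℂ) • ρ := by
    rw [hρ, smul_smul, ← Complex.ofReal_mul, mul_inv_cancel₀ hrne, Complex.ofReal_one,
      one_smul]
  rw [hXρ]
  exact Submodule.smul_mem _ _ hmem

private lemma herm_fixed_mem {Φ : Module.End ℂ (Mat d)} (hΦ : IsChannel Φ) {B : Mat d}
    (hB : B.IsHermitian) (hfix : Φ B = B) :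
    B ∈ Submodule.span ℂ {ρ : Mat d | IsState ρ ∧ Φ ρ = ρ} := by
  classical
  set U : Mat d := (hB.eigenvectorUnitary : Mat d) with hUdef
  have hU : Uᴴ * U = 1 := by
    simpa [Matrix.star_eq_conjTranspose] using
      Matrix.mem_unitaryGroup_iff'.mp hB.eigenvectorUnitary.2
  have hU' : U * Uᴴ = 1 := by
    simpa [Matrix.star_eq_conjTranspose] using
      Matrix.mem_unitaryGroup_iff.mp hB.eigenvectorUnitary.2
  set lam := hB.eigenvalues with hlam
  set cm : (Fin d → ℝ) → Mat d :=
    fun f => U * Matrix.diagonal (fun i => (f i : ℂ)) * Uᴴ with hcm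
  have hmul : ∀ f g, cm f * cm g = cm (fun i => f i * g i) := by
    intro f g
    simp only [hcm]
    rw [cm_mul_cm U hU]
    push_cast
    rfl
  have hsubR : ∀ f g, cm f - cm g = cm (fun i => f i - g i) := by
    intro f g
    simp only [hcm]
    rw [cm_sub U]
    push_cast
    rfl
  have hspec : B = cm lam := by
    have h := hB.spectral_theorem
    simp only [Unitary.conjStarAlgAut_apply] at h
    exact h
  set χ : Fin d → ℝ := fun i => if 0 < lam i then 1 else 0 with hχ
  set fp : Fin d → ℝ := fun i => max (lam i) 0 with hfp
  set fm : Fin d → ℝ := fun i => max (-lam i) 0 with hfm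
  set P := cm χ with hPdef
  set Bp := cm fp with hBpdef
  set Bm := cm fm with hBmdef
  set Q : Mat d := 1 - P with hQdef
  have hone : (1 : Mat d) = cm (fun _ => 1) := by
    simp only [hcm, Complex.ofReal_one, Matrix.diagonal_one, Matrix.mul_one, hU']
  have hQcm : Q = cm (fun i => 1 - χ i) := by
    rw [hQdef, hone, hsubR]
  have hchi : (fun i => χ i * χ i) = χ := by
    funext i
    by_cases h : 0 < lam i <;> simp [hχ, h]
  have hPP : P * P = P := by
    rw [hPdef, hmul]
    exact congrArg cm hchi
  have hchi' : (fun i => (1 - χ i) * (1 - χ i)) = fun i => 1 - χ i := by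
    funext i
    by_cases h : 0 < lam i <;> simp [hχ, h]
  have hQQ : Q * Q = Q := by
    rw [hQcm, hmul]
    exact congrArg cm hchi'
  have hPQ1 : P + Q = 1 := by rw [hQdef]; abel
  have hPherm : P.IsHermitian := cm_herm U χ
  have hQherm : Q.IsHermitian := by rw [hQcm]; exact cm_herm U _
  have hBppsd : Bp.PosSemidef := cm_psd U fun i => le_max_right _ _
  have hBmpsd : Bm.PosSemidef := cm_psd U fun i => le_max_right _ _
  have hfunPBP : (fun i => χ i * lam i * χ i) = fp := by
    funext i
    by_cases h : 0 < lam i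
    · simp [hχ, hfp, h, max_eq_left h.le]
    · simp [hχ, hfp, h, max_eq_right (not_lt.mp h)]
  have hPBP : P * B * P = Bp := by
    rw [hspec, hPdef, hmul, hmul]
    exact congrArg cm hfunPBP
  have hfunsub : (fun i => fp i - fm i) = lam := by
    funext i
    rcases le_or_gt (lam i) 0 with h | h
    · simp [hfp, hfm, max_eq_right h, max_eq_left (neg_nonneg.mpr h)]
    · simp [hfp, hfm, max_eq_left h.le, max_eq_right (neg_nonpos.mpr h.le)]
  have hsub : Bp - Bm = B := by
    rw [hBpdef, hBmdef, hsubR, hspec]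
    exact congrArg cm hfunsub
  have hkey : ∀ X : Mat d, (P * X * P).trace + (Q * X * Q).trace = X.trace := by
    intro X
    have h1 : (P * X * P).trace = (P * X).trace := by
      rw [Matrix.trace_mul_cycle, hPP]
    have h2 : (Q * X * Q).trace = (Q * X).trace := by
      rw [Matrix.trace_mul_cycle, hQQ]
    rw [h1, h2, ← Matrix.trace_add, ← Matrix.add_mul, hPQ1, Matrix.one_mul]
  -- the two error terms
  set X := Φ Bp with hXdef
  have hXpsd : X.PosSemidef := channel_psd hΦ hBppsd
  have hYpsd : (Φ Bm).PosSemidef := channel_psd hΦ hBmpsd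
  have hQXQpsd : (Q * X * Q).PosSemidef := by
    have h := hXpsd.mul_mul_conjTranspose_same Q
    rwa [hQherm.eq] at h
  have hPYPpsd : (P * Φ Bm * P).PosSemidef := by
    have h := hYpsd.mul_mul_conjTranspose_same P
    rwa [hPherm.eq] at h
  have ht1 : (0:ℂ) ≤ (Q * X * Q).trace := psd_trace_nonneg hQXQpsd
  have ht2 : (0:ℂ) ≤ (P * Φ Bm * P).trace := psd_trace_nonneg hPYPpsd
  have hBdec : Φ B = X - Φ Bm := by rw [← map_sub, hsub]
  have hchain : (P * X * P).trace - (P * Φ Bm * P).trace = Bp.trace := by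
    calc (P * X * P).trace - (P * Φ Bm * P).trace
        = (P * (X - Φ Bm) * P).trace := by
          rw [Matrix.mul_sub, Matrix.sub_mul, Matrix.trace_sub]
      _ = (P * B * P).trace := by rw [← hBdec, hfix]
      _ = Bp.trace := by rw [hPBP]
  have htrX : X.trace = Bp.trace := channel_trace hΦ Bp
  have hsum0 : (Q * X * Q).trace + (P * Φ Bm * P).trace = 0 := by
    have hk := hkey X
    rw [htrX] at hk
    linear_combination hk - hchain
  have hQXQ0 : Q * X * Q = 0 :=
    psd_trace_eq_zero hQXQpsd (le_antisymm (by
      calc (Q * X * Q).trace = -(P * Φ Bm * P).trace := by linear_combination hsum0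
        _ ≤ 0 := neg_nonpos.mpr ht2) ht1)
  have hPYP0 : P * Φ Bm * P = 0 :=
    psd_trace_eq_zero hPYPpsd (le_antisymm (by
      calc (P * Φ Bm * P).trace = -(Q * X * Q).trace := by linear_combination hsum0
        _ ≤ 0 := neg_nonpos.mpr ht1) ht2)
  -- support: X = P X P
  have hXQ : X * Q = 0 := by
    obtain ⟨S, hS⟩ : ∃ S : Mat d, X = star S * S := by
      open scoped MatrixOrder in
      exact CStarAlgebra.nonneg_iff_eq_star_mul_self.mp hXpsd.nonneg
    have h1 : (S * Q)ᴴ * (S * Q) = Q * X * Q := by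
      rw [Matrix.conjTranspose_mul, hQherm.eq, hS, Matrix.star_eq_conjTranspose]
      simp only [Matrix.mul_assoc]
    have hSQ : S * Q = 0 :=
      Matrix.conjTranspose_mul_self_eq_zero.mp (by rw [h1, hQXQ0])
    calc X * Q = star S * (S * Q) := by rw [hS, Matrix.mul_assoc]
      _ = 0 := by rw [hSQ, Matrix.mul_zero]
  have hQX : Q * X = 0 := by
    have h := congrArg Matrix.conjTranspose hXQ
    rwa [Matrix.conjTranspose_mul, hQherm.eq, hXpsd.isHermitian.eq,
      Matrix.conjTranspose_zero] at h
  have hXPXP : X = P * X * P := by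
    have h1 : (P + Q) * X * (P + Q) = P * X * P := by
      rw [Matrix.add_mul, hQX, add_zero, Matrix.mul_add,
        Matrix.mul_assoc P X Q, hXQ, Matrix.mul_zero, add_zero]
    rw [← h1, hPQ1, Matrix.one_mul, Matrix.mul_one]
  -- conclude Bp, Bm fixed
  have hBpBm : Bp = B + Bm := by rw [← hsub]; abel
  have hfixp : Φ Bp = Bp := by
    calc Φ Bp = P * X * P := hXPXP
      _ = P * (Φ B + Φ Bm) * P := by
          rw [hXdef, hBpBm, map_add]
      _ = P * B * P + P * Φ Bm * P := by
          rw [hfix, Matrix.mul_add, Matrix.add_mul]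
      _ = Bp := by rw [hPBP, hPYP0, add_zero]
  have hfixm : Φ Bm = Bm := by
    have h : Bm = Bp - B := by rw [← hsub]; abel
    rw [h, map_sub, hfixp, hfix]
  rw [← hsub]
  exact Submodule.sub_mem _ (psd_fixed_mem hBppsd hfixp) (psd_fixed_mem hBmpsd hfixm)

end Main


/-- The fixed-point space of a quantum channel is spanned by the
quantum states it contains. -/
theorem fixed_points_spanned_by_states (d : ℕ) (Φ : Module.End ℂ (Mat d))
    (hΦ : IsChannel Φ) (A : Mat d) (hA : Φ A = A) :
    A ∈ Submodule.span ℂ {ρ : Mat d | IsState ρ ∧ Φ ρ = ρ} := by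
  have hAH : Φ Aᴴ = Aᴴ := by rw [channel_conjTranspose hΦ, hA]
  set H1 : Mat d := (1/2 : ℂ) • (A + Aᴴ) with hH1
  set H2 : Mat d := (-Complex.I/2 : ℂ) • (A - Aᴴ) with hH2
  have hH1herm : H1.IsHermitian := by
    unfold Matrix.IsHermitian
    rw [hH1, Matrix.conjTranspose_smul, Matrix.conjTranspose_add,
      Matrix.conjTranspose_conjTranspose]
    rw [add_comm Aᴴ A]
    congr 1
    simp [Complex.star_def, Complex.ext_iff]
  have hH2herm : H2.IsHermitian := by
    unfold Matrix.IsHermitian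
    rw [hH2, Matrix.conjTranspose_smul, Matrix.conjTranspose_sub,
      Matrix.conjTranspose_conjTranspose]
    have h1 : Aᴴ - A = (-1 : ℂ) • (A - Aᴴ) := by
      rw [neg_one_smul]; abel
    rw [h1, smul_smul]
    congr 1
    simp only [Complex.star_def, map_div₀, map_neg, Complex.conj_I, map_ofNat]
    ring
  have hH1fix : Φ H1 = H1 := by rw [hH1, _root_.map_smul, map_add, hA, hAH]
  have hH2fix : Φ H2 = H2 := by rw [hH2, _root_.map_smul, map_sub, hA, hAH]
  have hcomb : A = H1 + Complex.I • H2 := by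
    rw [hH1, hH2, smul_smul]
    have hI : Complex.I * (-Complex.I / 2) = 1/2 := by
      linear_combination (-1/2 : ℂ) * Complex.I_mul_I
    rw [hI, ← smul_add]
    have : A + Aᴴ + (A - Aᴴ) = (2 : ℂ) • A := by
      rw [two_smul]; abel
    rw [this, smul_smul]
    norm_num
  rw [hcomb]
  exact Submodule.add_mem _ (herm_fixed_mem hΦ hH1herm hH1fix)
    (Submodule.smul_mem _ _ (herm_fixed_mem hΦ hH2herm hH2fix))
end
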